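/- arXiv:2111.12605 — 4 statements merged into one kernel-verified Lean document; each statement's English description precedes it below -/
import Mathlib

section
/- Let A be a C*-algebra and E a Hilbert A-module. For n ∈ ℕ and x₁,…,xₙ ∈ E define the Hilbert C*-multi-norm ‖(x₁,…,xₙ)‖ᴱₙ = sup ‖P₁x₁ + ⋯ + Pₙxₙ‖, where the supremum is taken over all families (P₁,…,Pₙ) of adjointable maps Pᵢ : E → E with Pᵢ* = Pᵢ, Pᵢ∘Pᵢ = Pᵢ, Pᵢ∘Pⱼ = 0 for i ≠ j, and P₁ + ⋯ + Pₙ = id_E (allowing Pⱼ = 0). Then for every adjointable T : E → E, every n ∈ ℕ, and all x₁,…,xₙ ∈ E one has ‖(Tx₁,…,Txₙ)‖ᴱₙ ≤ ‖T‖·‖(x₁,…,xₙ)‖ᴱₙ; consequently the multi-bounded norm of T, i.e. sup over n ∈ ℕ of the operator norm of the n-th amplification (x₁,…,xₙ) ↦ (Tx₁,…,Txₙ) with respect to ‖·‖ᴱₙ on both sides, equals the operator norm ‖T‖. -/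
open scoped InnerProductSpace RightActions

noncomputable section

/-- The Hilbert C⋆-module class as it stood in Mathlib (Dec 2024): a *right* `A`-module
(`SMul Aᵐᵒᵖ E`) with `⟪x, y <• a⟫_A = ⟪x, y⟫_A * a`. Mathlib's `CStarModule` now asks for
`SMul A E` with `⟪x, a • y⟫_A = a * ⟪x, y⟫_A`, a different notion. -/
class CStarModule' (A E : Type*) [NonUnitalSemiring A] [StarRing A]
    [Module ℂ A] [AddCommGroup E] [Module ℂ E] [PartialOrder A] [SMul Aᵐᵒᵖ E] [Norm A] [Norm E]
    extends Inner A E where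
  inner_add_right {x} {y} {z} : inner x (y + z) = inner x y + inner x z
  inner_self_nonneg {x} : 0 ≤ inner x x
  inner_self {x} : inner x x = 0 ↔ x = 0
  inner_op_smul_right {a : A} {x y : E} : inner x (y <• a) = inner x y * a
  inner_smul_right_complex {z : ℂ} {x} {y} : inner x (z • y) = z • inner x y
  star_inner x y : star (inner x y) = inner y x
  norm_eq_sqrt_norm_inner_self x : ‖x‖ = √‖inner x x‖

variable {A : Type*} [NonUnitalCStarAlgebra A] [PartialOrder A] [StarOrderedRing A]
variable {E : Type*} [NormedAddCommGroup E] [NormedSpace ℂ E] [SMul Aᵐᵒᵖ E]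
  [CStarModule' A E] [CompleteSpace E]

/-- The Hilbert C*-multi-norm `‖(x₁,…,xₙ)‖ᴱₙ = sup ‖P₁x₁ + ⋯ + Pₙxₙ‖`, the supremum being
taken over all families of mutually orthogonal (self-adjoint, idempotent, hence adjointable)
projections in `L(E)` summing to the identity (possibly zero). -/
def hilbertMultiNorm {n : ℕ} (x : Fin n → E) : ℝ :=
  sSup {r : ℝ | ∃ P : Fin n → E →L[ℂ] E,
    (∀ i, ∀ z w : E, ⟪(P i) z, w⟫_A = ⟪z, (P i) w⟫_A) ∧
    (∀ i, (P i).comp (P i) = P i) ∧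
    (∀ i j, i ≠ j → (P i).comp (P j) = 0) ∧
    (∑ i, P i) = 1 ∧
    r = ‖∑ i, (P i) (x i)‖}

namespace CStarModule'

lemma inner_add_left {x y z : E} : ⟪x + y, z⟫_A = ⟪x, z⟫_A + ⟪y, z⟫_A := by
  rw [← CStarModule'.star_inner (A := A) z (x + y), CStarModule'.inner_add_right, star_add,
    CStarModule'.star_inner, CStarModule'.star_inner]

lemma inner_smul_left_complex {z : ℂ} {x y : E} : ⟪z • x, y⟫_A = star z • ⟪x, y⟫_A := by
  rw [← CStarModule'.star_inner (A := A) y (z • x), CStarModule'.inner_smul_right_complex,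
    star_smul, CStarModule'.star_inner]

lemma inner_op_smul_left {a : A} {x y : E} : ⟪x <• a, y⟫_A = star a * ⟪x, y⟫_A := by
  rw [← CStarModule'.star_inner (A := A) y (x <• a), CStarModule'.inner_op_smul_right,
    star_mul, CStarModule'.star_inner]

lemma inner_smul_left_real {z : ℝ} {x y : E} : ⟪z • x, y⟫_A = z • ⟪x, y⟫_A := by
  have h₁ : z • x = (z : ℂ) • x := by simp
  rw [h₁, inner_smul_left_complex]
  simp

lemma inner_smul_right_real {z : ℝ} {x y : E} : ⟪x, z • y⟫_A = z • ⟪x, y⟫_A := by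
  have h₁ : z • y = (z : ℂ) • y := by simp
  rw [h₁, CStarModule'.inner_smul_right_complex]
  simp

variable (A) in
def innerₗ (x : E) : E →ₗ[ℂ] A where
  toFun y := ⟪x, y⟫_A
  map_add' _ _ := CStarModule'.inner_add_right
  map_smul' _ _ := CStarModule'.inner_smul_right_complex

lemma inner_zero_right {x : E} : ⟪x, 0⟫_A = 0 := map_zero (innerₗ A x)

lemma inner_zero_left {x : E} : ⟪0, x⟫_A = 0 := by
  rw [← CStarModule'.star_inner (A := A) x 0, inner_zero_right, star_zero]

lemma inner_sub_right {x y z : E} : ⟪x, y - z⟫_A = ⟪x, y⟫_A - ⟪x, z⟫_A := map_sub (innerₗ A x) y z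

lemma inner_sub_left {x y z : E} : ⟪x - y, z⟫_A = ⟪x, z⟫_A - ⟪y, z⟫_A := by
  rw [← CStarModule'.star_inner (A := A) z (x - y), inner_sub_right, star_sub,
    CStarModule'.star_inner, CStarModule'.star_inner]

lemma inner_sum_right {ι : Type*} {s : Finset ι} {x : E} {y : ι → E} :
    ⟪x, ∑ i ∈ s, y i⟫_A = ∑ i ∈ s, ⟪x, y i⟫_A :=
  map_sum (innerₗ A x) y s

lemma inner_sum_left {ι : Type*} {s : Finset ι} {x : ι → E} {y : E} :
    ⟪∑ i ∈ s, x i, y⟫_A = ∑ i ∈ s, ⟪x i, y⟫_A := by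
  rw [← CStarModule'.star_inner (A := A) y, inner_sum_right, star_sum]
  simp only [CStarModule'.star_inner]

lemma norm_sq_eq {x : E} : ‖x‖ ^ 2 = ‖⟪x, x⟫_A‖ := by
  rw [CStarModule'.norm_eq_sqrt_norm_inner_self (A := A) x, Real.sq_sqrt (norm_nonneg _)]

lemma inner_mul_inner_swap_le {x y : E} : ⟪y, x⟫_A * ⟪x, y⟫_A ≤ ‖x‖ ^ 2 • ⟪y, y⟫_A := by
  rcases eq_or_ne x 0 with h | h
  · simp [h, inner_zero_left, inner_zero_right]
  · have h₁ : ∀ (a : A),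
        (0 : A) ≤ ‖x‖ ^ 2 • (star a * a) - ‖x‖ ^ 2 • (star a * ⟪x, y⟫_A)
                  - ‖x‖ ^ 2 • (⟪y, x⟫_A * a) + ‖x‖ ^ 2 • (‖x‖ ^ 2 • ⟪y, y⟫_A) := fun a => by
      calc (0 : A) ≤ ⟪x <• a - ‖x‖ ^ 2 • y, x <• a - ‖x‖ ^ 2 • y⟫_A := by
                      exact CStarModule'.inner_self_nonneg
            _ = star a * ⟪x, x⟫_A * a - ‖x‖ ^ 2 • (star a * ⟪x, y⟫_A)
                  - ‖x‖ ^ 2 • (⟪y, x⟫_A * a) + ‖x‖ ^ 2 • (‖x‖ ^ 2 • ⟪y, y⟫_A) := by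
                      simp only [inner_sub_right, CStarModule'.inner_op_smul_right, inner_sub_left,
                        inner_op_smul_left, inner_smul_left_real, mul_sub, sub_mul, mul_smul_comm,
                        inner_smul_right_real, smul_sub, smul_mul_assoc, mul_assoc]
                      abel
            _ ≤ ‖x‖ ^ 2 • (star a * a) - ‖x‖ ^ 2 • (star a * ⟪x, y⟫_A)
                  - ‖x‖ ^ 2 • (⟪y, x⟫_A * a) + ‖x‖ ^ 2 • (‖x‖ ^ 2 • ⟪y, y⟫_A) := by
                      gcongr
                      calc _ ≤ ‖⟪x, x⟫_A‖ • (star a * a) :=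
                          CStarAlgebra.star_left_conjugate_le_norm_smul
                              (hb := CStarModule'.star_inner (A := A) x x)
                        _ = ‖x‖ ^ 2 • (star a * a) := by rw [norm_sq_eq (A := A) (x := x)]
    specialize h₁ ⟪x, y⟫_A
    simp only [CStarModule'.star_inner, sub_self, zero_sub, le_neg_add_iff_add_le,
      add_zero] at h₁
    rwa [smul_le_smul_iff_of_pos_left (pow_pos (norm_pos_iff.mpr h) _)] at h₁

variable (E) in
lemma norm_inner_le {x y : E} : ‖⟪x, y⟫_A‖ ≤ ‖x‖ * ‖y‖ := by
  have := calc ‖⟪x, y⟫_A‖ ^ 2 = ‖⟪y, x⟫_A * ⟪x, y⟫_A‖ := by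
                rw [← CStarModule'.star_inner (A := A) x y, CStarRing.norm_star_mul_self, pow_two]
    _ ≤ ‖‖x‖ ^ 2 • ⟪y, y⟫_A‖ := by
                refine CStarAlgebra.norm_le_norm_of_nonneg_of_le ?_ inner_mul_inner_swap_le
                rw [← CStarModule'.star_inner (A := A) x y]
                exact star_mul_self_nonneg ⟪x, y⟫_A
    _ = ‖x‖ ^ 2 * ‖⟪y, y⟫_A‖ := by simp [norm_smul]
    _ = ‖x‖ ^ 2 * ‖y‖ ^ 2 := by rw [norm_sq_eq (A := A) (x := y)]
    _ = (‖x‖ * ‖y‖) ^ 2 := by simp only [mul_pow]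
  refine (pow_le_pow_iff_left₀ (norm_nonneg ⟪x, y⟫_A) ?_ (by simp)).mp this
  exact mul_nonneg (norm_nonneg _) (norm_nonneg _)

lemma continuous_inner : Continuous (fun x : E × E => ⟪x.1, x.2⟫_A) := by
  rw [Metric.continuous_iff]
  rintro ⟨x₀, y₀⟩ ε hε
  set K : ℝ := ‖x₀‖ + ‖y₀‖ + 1 with hK
  have hK0 : 0 < K := by positivity
  refine ⟨min 1 (ε / (4 * K)), by positivity, ?_⟩
  rintro ⟨x, y⟩ hd
  have hd1 : dist (x, y) (x₀, y₀) < 1 := lt_of_lt_of_le hd (min_le_left _ _)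
  have hd2 : dist (x, y) (x₀, y₀) < ε / (4 * K) := lt_of_lt_of_le hd (min_le_right _ _)
  rw [Prod.dist_eq, max_lt_iff] at hd1 hd2
  simp only [dist_eq_norm] at hd1 hd2
  simp only [dist_eq_norm]
  have heq : ⟪x, y⟫_A - ⟪x₀, y₀⟫_A = ⟪x - x₀, y⟫_A + ⟪x₀, y - y₀⟫_A := by
    rw [inner_sub_left, inner_sub_right]; abel
  rw [heq]
  have hy : ‖y‖ ≤ ‖y₀‖ + 1 := by
    have := norm_sub_norm_le y y₀
    linarith [hd1.2]
  have e1 := norm_inner_le E (A := A) (x := x - x₀) (y := y)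
  have e2 := norm_inner_le E (A := A) (x := x₀) (y := y - y₀)
  have hx0 := norm_nonneg x₀
  have hy0 := norm_nonneg y₀
  calc ‖⟪x - x₀, y⟫_A + ⟪x₀, y - y₀⟫_A‖ ≤ ‖⟪x - x₀, y⟫_A‖ + ‖⟪x₀, y - y₀⟫_A‖ := norm_add_le _ _
    _ ≤ ‖x - x₀‖ * ‖y‖ + ‖x₀‖ * ‖y - y₀‖ := add_le_add e1 e2
    _ ≤ ε / (4 * K) * K + K * (ε / (4 * K)) := by
        gcongr <;> linarith [hd2.1, hd2.2]
    _ = ε / 2 := by field_simp; ring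
    _ < ε := by linarith

end CStarModule'

namespace HMN
open CStarModule

def AdjPair (T S : E →L[ℂ] E) : Prop := ∀ x y : E, ⟪T x, y⟫_A = ⟪x, S y⟫_A

lemma AdjPair.symm {T S : E →L[ℂ] E} (h : AdjPair (A := A) T S) : AdjPair (A := A) S T := by
  intro x y
  calc ⟪S x, y⟫_A = star ⟪y, S x⟫_A := by rw [CStarModule'.star_inner]
    _ = star ⟪T y, x⟫_A := by rw [h y x]
    _ = ⟪x, T y⟫_A := by rw [CStarModule'.star_inner]

lemma ext_of_inner_right {S₁ S₂ : E →L[ℂ] E}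
    (h : ∀ x y : E, ⟪x, S₁ y⟫_A = ⟪x, S₂ y⟫_A) : S₁ = S₂ := by
  ext y
  have h0 : ⟪S₁ y - S₂ y, S₁ y - S₂ y⟫_A = 0 := by
    rw [CStarModule'.inner_sub_right, h (S₁ y - S₂ y) y, sub_self]
  exact sub_eq_zero.mp ((CStarModule'.inner_self (A := A)).mp h0)

lemma AdjPair.norm_le {T S : E →L[ℂ] E} (h : AdjPair (A := A) T S) : ‖S‖ ≤ ‖T‖ := by
  refine ContinuousLinearMap.opNorm_le_bound _ (norm_nonneg T) fun y => ?_
  rcases eq_or_lt_of_le (norm_nonneg (S y)) with h0 | h0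
  · rw [← h0]; positivity
  · have h1 : ‖S y‖ ^ 2 = ‖⟪S y, S y⟫_A‖ := CStarModule'.norm_sq_eq
    have h2 : ⟪S y, S y⟫_A = ⟪y, T (S y)⟫_A := h.symm y (S y)
    have h3 : ‖⟪y, T (S y)⟫_A‖ ≤ ‖y‖ * ‖T (S y)‖ := CStarModule'.norm_inner_le E
    have h4 : ‖T (S y)‖ ≤ ‖T‖ * ‖S y‖ := T.le_opNorm _
    have h5 : ‖S y‖ ^ 2 ≤ ‖y‖ * (‖T‖ * ‖S y‖) := by
      rw [h1, h2]
      exact h3.trans (by nlinarith [norm_nonneg y])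
    nlinarith

lemma AdjPair.norm_eq {T S : E →L[ℂ] E} (h : AdjPair (A := A) T S) : ‖S‖ = ‖T‖ :=
  le_antisymm h.norm_le h.symm.norm_le

variable (A E) in
/-- The subalgebra of adjointable operators on a Hilbert C*-module. -/
def adjointables : Subalgebra ℂ (E →L[ℂ] E) where
  carrier := {T | ∃ S : E →L[ℂ] E, AdjPair (A := A) T S}
  mul_mem' := by
    rintro T₁ T₂ ⟨S₁, hS₁⟩ ⟨S₂, hS₂⟩
    exact ⟨S₂ * S₁, fun x y => by
      simp only [ContinuousLinearMap.mul_apply]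
      rw [hS₁ (T₂ x) y, hS₂ x (S₁ y)]⟩
  add_mem' := by
    rintro T₁ T₂ ⟨S₁, hS₁⟩ ⟨S₂, hS₂⟩
    exact ⟨S₁ + S₂, fun x y => by
      simp only [ContinuousLinearMap.add_apply, CStarModule'.inner_add_left,
        CStarModule'.inner_add_right, hS₁ x y, hS₂ x y]⟩
  algebraMap_mem' := by
    intro c
    refine ⟨star c • 1, fun x y => ?_⟩
    simp only [Algebra.algebraMap_eq_smul_one, ContinuousLinearMap.smul_apply,
      ContinuousLinearMap.one_apply]
    rw [CStarModule'.inner_smul_left_complex, CStarModule'.inner_smul_right_complex]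

local notation "𝓐" => adjointables A E

lemma coe_mul_apply (T S : ↥𝓐) (x : E) :
    ((T * S : ↥𝓐) : E →L[ℂ] E) x = (T : E →L[ℂ] E) ((S : E →L[ℂ] E) x) := rfl

instance : Star ↥𝓐 :=
  ⟨fun T => ⟨T.2.choose, ⟨(T : E →L[ℂ] E), T.2.choose_spec.symm⟩⟩⟩

lemma star_pair (T : ↥𝓐) :
    AdjPair (A := A) (T : E →L[ℂ] E) ((star T : ↥𝓐) : E →L[ℂ] E) := T.2.choose_spec

lemma star_pair' (T : ↥𝓐) :
    AdjPair (A := A) ((star T : ↥𝓐) : E →L[ℂ] E) (T : E →L[ℂ] E) := (star_pair T).symm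

lemma ext_adj {T S : ↥𝓐}
    (h : ∀ x y : E, ⟪x, (T : E →L[ℂ] E) y⟫_A = ⟪x, (S : E →L[ℂ] E) y⟫_A) : T = S :=
  Subtype.ext (ext_of_inner_right h)

instance : StarRing ↥𝓐 where
  star_involutive T := by
    refine ext_adj fun x y => ?_
    rw [← star_pair (star T) x y, star_pair' T x y]
  star_mul T S := by
    refine ext_adj fun x y => ?_
    rw [← star_pair (T * S) x y, coe_mul_apply, star_pair T (_) y, star_pair S x _,
      ← coe_mul_apply (star S) (star T)]
  star_add T S := by
    refine ext_adj fun x y => ?_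
    rw [← star_pair (T + S) x y]
    have : ((T + S : ↥𝓐) : E →L[ℂ] E) x = (T : E →L[ℂ] E) x + (S : E →L[ℂ] E) x := rfl
    rw [this]
    have h2 : ((star T + star S : ↥𝓐) : E →L[ℂ] E) y
        = ((star T : ↥𝓐) : E →L[ℂ] E) y + ((star S : ↥𝓐) : E →L[ℂ] E) y := rfl
    rw [h2, CStarModule'.inner_add_left, CStarModule'.inner_add_right,
      star_pair T x y, star_pair S x y]

instance : StarModule ℂ ↥𝓐 where
  star_smul c T := by
    refine ext_adj fun x y => ?_
    rw [← star_pair (c • T) x y]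
    have : ((c • T : ↥𝓐) : E →L[ℂ] E) x = c • (T : E →L[ℂ] E) x := rfl
    rw [this]
    have h2 : ((star c • star T : ↥𝓐) : E →L[ℂ] E) y
        = star c • ((star T : ↥𝓐) : E →L[ℂ] E) y := rfl
    rw [h2, CStarModule'.inner_smul_left_complex, CStarModule'.inner_smul_right_complex,
      star_pair T x y]

lemma norm_adj_star (T : ↥𝓐) : ‖star T‖ = ‖T‖ := (star_pair T).norm_eq

instance : CStarRing ↥𝓐 where
  norm_mul_self_le T := by
    have key : ∀ z : E, ‖(T : E →L[ℂ] E) z‖ ^ 2 ≤ ‖((star T * T : ↥𝓐) : E →L[ℂ] E)‖ * ‖z‖ ^ 2 := by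
      intro z
      have h1 : ‖(T : E →L[ℂ] E) z‖ ^ 2 = ‖⟪(T : E →L[ℂ] E) z, (T : E →L[ℂ] E) z⟫_A‖ :=
        CStarModule'.norm_sq_eq
      have h2 : ⟪(T : E →L[ℂ] E) z, (T : E →L[ℂ] E) z⟫_A
          = ⟪z, ((star T * T : ↥𝓐) : E →L[ℂ] E) z⟫_A := by
        rw [star_pair T z _, coe_mul_apply]
      have h3 : ‖⟪z, ((star T * T : ↥𝓐) : E →L[ℂ] E) z⟫_A‖
          ≤ ‖z‖ * ‖((star T * T : ↥𝓐) : E →L[ℂ] E) z‖ := CStarModule'.norm_inner_le E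
      have h4 := (((star T * T : ↥𝓐) : E →L[ℂ] E)).le_opNorm z
      calc ‖(T : E →L[ℂ] E) z‖ ^ 2 = ‖⟪z, ((star T * T : ↥𝓐) : E →L[ℂ] E) z⟫_A‖ := by
            rw [h1, h2]
        _ ≤ ‖z‖ * ‖((star T * T : ↥𝓐) : E →L[ℂ] E) z‖ := h3
        _ ≤ ‖((star T * T : ↥𝓐) : E →L[ℂ] E)‖ * ‖z‖ ^ 2 := by nlinarith [norm_nonneg z]
    have hTle : ‖(T : E →L[ℂ] E)‖ ≤ Real.sqrt ‖((star T * T : ↥𝓐) : E →L[ℂ] E)‖ := by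
      refine ContinuousLinearMap.opNorm_le_bound _ (Real.sqrt_nonneg _) fun z => ?_
      have := key z
      have h0 : (0:ℝ) ≤ ‖((star T * T : ↥𝓐) : E →L[ℂ] E)‖ := norm_nonneg _
      calc ‖(T : E →L[ℂ] E) z‖ = Real.sqrt (‖(T : E →L[ℂ] E) z‖ ^ 2) := by
            rw [Real.sqrt_sq (norm_nonneg _)]
        _ ≤ Real.sqrt (‖((star T * T : ↥𝓐) : E →L[ℂ] E)‖ * ‖z‖ ^ 2) := Real.sqrt_le_sqrt this
        _ = Real.sqrt ‖((star T * T : ↥𝓐) : E →L[ℂ] E)‖ * ‖z‖ := by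
            rw [Real.sqrt_mul h0, Real.sqrt_sq (norm_nonneg _)]
    have : ‖T‖ ^ 2 ≤ ‖star T * T‖ := by
      have hsq := Real.sqrt_le_sqrt (le_refl ‖((star T * T : ↥𝓐) : E →L[ℂ] E)‖)
      have h0 : (0:ℝ) ≤ ‖star T * T‖ := norm_nonneg _
      calc ‖T‖ ^ 2 ≤ (Real.sqrt ‖((star T * T : ↥𝓐) : E →L[ℂ] E)‖) ^ 2 := by
            have h' : (0:ℝ) ≤ ‖T‖ := norm_nonneg _
            exact pow_le_pow_left₀ h' hTle 2
        _ = ‖star T * T‖ := Real.sq_sqrt h0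
    nlinarith [norm_nonneg T]

lemma isClosed_adjointables : IsClosed ((𝓐 : Set (E →L[ℂ] E))) := by
  refine IsSeqClosed.isClosed fun f T hf hlim => ?_
  choose S hS using hf
  have hcauchy : CauchySeq f := hlim.cauchySeq
  have hScauchy : CauchySeq S := by
    rw [Metric.cauchySeq_iff] at hcauchy ⊢
    intro ε hε
    obtain ⟨N, hN⟩ := hcauchy ε hε
    refine ⟨N, fun m hm n hn => ?_⟩
    have hpair : AdjPair (A := A) (f m - f n) (S m - S n) := fun x y => by
      simp only [ContinuousLinearMap.sub_apply, CStarModule'.inner_sub_left,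
        CStarModule'.inner_sub_right, hS m x y, hS n x y]
    have : ‖S m - S n‖ = ‖f m - f n‖ := hpair.norm_eq
    rw [dist_eq_norm] at *
    rw [this, ← dist_eq_norm]
    exact hN m hm n hn
  obtain ⟨Slim, hSlim⟩ := cauchySeq_tendsto_of_complete hScauchy
  refine ⟨Slim, fun x y => ?_⟩
  have h1 : Filter.Tendsto (fun n => ⟪f n x, y⟫_A) Filter.atTop (nhds ⟪T x, y⟫_A) := by
    have hx : Filter.Tendsto (fun n => f n x) Filter.atTop (nhds (T x)) := by
      have := (ContinuousLinearMap.apply ℂ E x).continuous.tendsto T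
      exact this.comp hlim
    have : Filter.Tendsto (fun n => (f n x, y)) Filter.atTop (nhds (T x, y)) :=
      hx.prodMk_nhds tendsto_const_nhds
    exact (CStarModule'.continuous_inner (A := A) (E := E)).tendsto (T x, y) |>.comp this
  have h2 : Filter.Tendsto (fun n => ⟪x, S n y⟫_A) Filter.atTop (nhds ⟪x, Slim y⟫_A) := by
    have hy : Filter.Tendsto (fun n => S n y) Filter.atTop (nhds (Slim y)) := by
      have := (ContinuousLinearMap.apply ℂ E y).continuous.tendsto Slim
      exact this.comp hSlim
    have : Filter.Tendsto (fun n => (x, S n y)) Filter.atTop (nhds (x, Slim y)) :=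
      tendsto_const_nhds.prodMk_nhds hy
    exact (CStarModule'.continuous_inner (A := A) (E := E)).tendsto (x, Slim y) |>.comp this
  have heq : (fun n => ⟪f n x, y⟫_A) = fun n => ⟪x, S n y⟫_A := funext fun n => hS n x y
  rw [heq] at h1
  exact tendsto_nhds_unique h1 h2

instance : CompleteSpace ↥𝓐 := (isClosed_adjointables (A := A) (E := E)).completeSpace_coe

instance instCStarAlg : CStarAlgebra ↥𝓐 := {}

instance : PartialOrder ↥𝓐 := CStarAlgebra.spectralOrder _
instance : StarOrderedRing ↥𝓐 := CStarAlgebra.spectralOrderedRing _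


section CFCpieces
section CStar
variable {B : Type*} [CStarAlgebra B] [PartialOrder B] [StarOrderedRing B] [Nontrivial B]

lemma exists_two_unitaries {g : B} (hg : IsUnit g) (hgn : ‖g‖ ≤ 1) :
    ∃ u v : B, u ∈ unitary B ∧ v ∈ unitary B ∧ u + v = g + g := by
  have hpsa : IsSelfAdjoint (star g * g) := IsSelfAdjoint.star_mul_self g
  have hp0 : (0:B) ≤ star g * g := star_mul_self_nonneg g
  have hpu : IsUnit (star g * g) := hg.star.mul hg
  have hpnorm : ‖star g * g‖ ≤ 1 := by
    rw [CStarRing.norm_star_mul_self]; nlinarith [norm_nonneg g]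
  set p : B := star g * g with hp_def
  have hspec0 : ∀ t ∈ spectrum ℝ p, 0 ≤ t := fun t ht => spectrum_nonneg_of_nonneg hp0 ht
  have hspec1 : ∀ t ∈ spectrum ℝ p, t ≤ 1 := fun t ht =>
    le_trans (le_trans (Real.le_norm_self t) (spectrum.norm_le_norm_of_mem ht)) hpnorm
  have hzero : (0:ℝ) ∉ spectrum ℝ p := (spectrum.zero_notMem_iff (R := ℝ)).mpr hpu
  have hspecne : ∀ t ∈ spectrum ℝ p, t ≠ 0 := fun t ht h0 => hzero (h0 ▸ ht)
  have hinvcont : ContinuousOn (fun t : ℝ => t⁻¹) (spectrum ℝ p) :=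
    ContinuousOn.inv₀ continuousOn_id hspecne
  set r : B := cfc Real.sqrt p with hr_def
  set s : B := cfc (fun t : ℝ => Real.sqrt (1 - t)) p with hs_def
  set pinv : B := cfc (fun t : ℝ => t⁻¹) p with hpinv_def
  have hrsa : IsSelfAdjoint r := cfc_predicate _ p
  have hssa : IsSelfAdjoint s := cfc_predicate _ p
  have hrr : r * r = p := by
    rw [hr_def, ← cfc_mul Real.sqrt Real.sqrt p]
    calc cfc (fun t : ℝ => Real.sqrt t * Real.sqrt t) p = cfc (fun t : ℝ => t) p :=
          cfc_congr fun t ht => Real.mul_self_sqrt (hspec0 t ht)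
      _ = p := cfc_id' ℝ p
  have hss : s * s = 1 - p := by
    rw [hs_def, ← cfc_mul _ _ p]
    calc cfc (fun t : ℝ => Real.sqrt (1-t) * Real.sqrt (1-t)) p
        = cfc (fun t : ℝ => 1 - t) p :=
          cfc_congr fun t ht => Real.mul_self_sqrt (by linarith [hspec1 t ht])
      _ = cfc (fun _ : ℝ => (1:ℝ)) p - cfc (fun t : ℝ => t) p := by
          rw [← cfc_sub (fun _ : ℝ => (1:ℝ)) (fun t : ℝ => t) p]
      _ = 1 - p := by rw [cfc_const_one ℝ p, cfc_id' ℝ p]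
  have hrs : r * s = s * r := by
    rw [hr_def, hs_def, ← cfc_mul _ _ p, ← cfc_mul _ _ p]
    exact cfc_congr fun t _ => mul_comm _ _
  have hppinv : p * pinv = 1 := by
    have h1 : p * pinv = cfc (fun t : ℝ => t * t⁻¹) p := by
      rw [hpinv_def, cfc_mul _ _ p (by fun_prop) hinvcont]
      congr 1
      exact (cfc_id' ℝ p).symm
    rw [h1]
    calc cfc (fun t : ℝ => t * t⁻¹) p = cfc (fun _ : ℝ => (1:ℝ)) p :=
          cfc_congr fun t ht => mul_inv_cancel₀ (hspecne t ht)
      _ = 1 := cfc_const_one ℝ p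
  have hpinvp : pinv * p = 1 := by
    have h1 : pinv * p = cfc (fun t : ℝ => t⁻¹ * t) p := by
      rw [hpinv_def, cfc_mul _ _ p hinvcont (by fun_prop)]
      congr 1
      exact (cfc_id' ℝ p).symm
    rw [h1]
    calc cfc (fun t : ℝ => t⁻¹ * t) p = cfc (fun _ : ℝ => (1:ℝ)) p :=
          cfc_congr fun t ht => inv_mul_cancel₀ (hspecne t ht)
      _ = 1 := cfc_const_one ℝ p
  have hrpinv : r * pinv = pinv * r := by
    rw [hr_def, hpinv_def, ← cfc_mul _ _ p (by fun_prop) hinvcont,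
      ← cfc_mul _ _ p hinvcont (by fun_prop)]
    exact cfc_congr fun t _ => mul_comm _ _
  -- r is invertible with inverse pinv * r
  have hrinv1 : r * (pinv * r) = 1 := by
    rw [← mul_assoc, hrpinv, mul_assoc, hrr, hpinvp]
  have hrinv2 : (pinv * r) * r = 1 := by
    rw [mul_assoc, hrr, hpinvp]
  set rinv : B := pinv * r with hrinv_def
  have hstar_rinv : star rinv = rinv := by
    have h1 : star rinv * star r = 1 := by
      rw [← star_mul, hrinv1, star_one]
    have h2 : star rinv * r = 1 := by rwa [hrsa.star_eq] at h1
    calc star rinv = star rinv * (r * rinv) := by rw [hrinv1]; exact (mul_one _).symm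
      _ = (star rinv * r) * rinv := by rw [mul_assoc]
      _ = rinv := by rw [h2, one_mul]
  set w : B := g * rinv with hw_def
  have hsw : star w = rinv * star g := by rw [hw_def, star_mul, hstar_rinv]
  have hrinv1' : r * rinv = 1 := hrinv1
  have hrinv2' : rinv * r = 1 := hrinv2
  have hw1 : star w * w = 1 := by
    calc star w * w = (rinv * star g) * (g * rinv) := by rw [hsw]
      _ = rinv * ((star g * g) * rinv) := by rw [mul_assoc, ← mul_assoc (star g)]
      _ = rinv * ((r * r) * rinv) := by rw [← hp_def, ← hrr]
      _ = (rinv * r) * (r * rinv) := by rw [mul_assoc r r rinv, ← mul_assoc rinv r (r * rinv)]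
      _ = 1 := by rw [hrinv2', hrinv1', one_mul]
  have hwu : IsUnit w := hg.mul ⟨⟨rinv, r, hrinv2, hrinv1⟩, rfl⟩
  have hw2 : w * star w = 1 := by
    obtain ⟨wu, hwu_eq⟩ := hwu
    have hinv : (↑wu⁻¹ : B) = star w :=
      Units.inv_eq_of_mul_eq_one_left (by rw [hwu_eq]; exact hw1)
    rw [← hinv, ← hwu_eq]
    exact wu.mul_inv
  set u0 : B := r + Complex.I • s with hu0_def
  set v0 : B := r - Complex.I • s with hv0_def
  have hstar_u0 : star u0 = v0 := by
    rw [hu0_def, hv0_def, star_add, hrsa.star_eq, star_smul, hssa.star_eq,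
      Complex.star_def, Complex.conj_I, neg_smul, ← sub_eq_add_neg]
  have hstar_v0 : star v0 = u0 := by
    rw [← hstar_u0, star_star]
  have hv0u0 : v0 * u0 = 1 := by
    have expand : v0 * u0 = r * r + Complex.I • (r * s) - Complex.I • (s * r)
        - (Complex.I * Complex.I) • (s * s) := by
      rw [hv0_def, hu0_def]
      simp only [mul_add, sub_mul, smul_sub, smul_add, mul_smul_comm, smul_mul_assoc, smul_smul]
      abel
    rw [expand, hrs, hrr, hss, Complex.I_mul_I, neg_smul, one_smul]
    abel
  have hu0v0 : u0 * v0 = 1 := by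
    have expand : u0 * v0 = r * r - Complex.I • (r * s) + Complex.I • (s * r)
        - (Complex.I * Complex.I) • (s * s) := by
      rw [hv0_def, hu0_def]
      simp only [mul_sub, add_mul, smul_sub, smul_add, mul_smul_comm, smul_mul_assoc, smul_smul]
      abel
    rw [expand, hrs, hrr, hss, Complex.I_mul_I, neg_smul, one_smul]
    abel
  have hu0_mem : u0 ∈ unitary B := by
    rw [Unitary.mem_iff]
    exact ⟨by rw [hstar_u0]; exact hv0u0, by rw [hstar_u0]; exact hu0v0⟩
  have hv0_mem : v0 ∈ unitary B := by
    rw [Unitary.mem_iff]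
    exact ⟨by rw [hstar_v0]; exact hu0v0, by rw [hstar_v0]; exact hv0u0⟩
  have hw_mem : w ∈ unitary B := by
    rw [Unitary.mem_iff]; exact ⟨hw1, hw2⟩
  refine ⟨w * u0, w * v0, mul_mem hw_mem hu0_mem, mul_mem hw_mem hv0_mem, ?_⟩
  have hwr : w * r = g := by
    rw [hw_def, mul_assoc, hrinv2', mul_one]
  calc w * u0 + w * v0 = w * (u0 + v0) := (mul_add w u0 v0).symm
    _ = w * (r + r) := by
        rw [hu0_def, hv0_def]
        congr 1
        abel
    _ = g + g := by rw [mul_add, hwr]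

lemma absorb_unitary {u a : B} (hu : u ∈ unitary B) (ha : ‖a‖ < 1) :
    ∃ w₁ w₂ : B, w₁ ∈ unitary B ∧ w₂ ∈ unitary B ∧ w₁ + w₂ = u + a := by
  have hnorm_u : ‖u‖ = 1 := CStarRing.norm_coe_unitary ⟨u, hu⟩
  have hstar_u : ‖star u * a‖ < 1 := by
    calc ‖star u * a‖ ≤ ‖star u‖ * ‖a‖ := norm_mul_le _ _
      _ = ‖a‖ := by rw [norm_star, hnorm_u, one_mul]
      _ < 1 := ha
  have hunit1 : IsUnit (1 - -(star u * a)) :=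
    (Units.oneSub (-(star u * a)) (by rwa [norm_neg])).isUnit
  have hua : IsUnit (u + a) := by
    have heq : u + a = u * (1 + star u * a) := by
      rw [mul_add, mul_one, ← mul_assoc, Unitary.mem_iff.mp hu |>.2, one_mul]
    rw [heq]
    refine (Unitary.toUnits ⟨u, hu⟩).isUnit.mul ?_
    simpa [sub_neg_eq_add] using hunit1
  have h2ne : (2:ℂ) ≠ 0 := by norm_num
  set g : B := (2:ℂ)⁻¹ • (u + a) with hg_def
  have hgu : IsUnit g := by
    obtain ⟨x, hx⟩ := hua
    refine ⟨⟨g, (2:ℂ) • ↑x⁻¹, ?_, ?_⟩, rfl⟩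
    · rw [hg_def, smul_mul_smul_comm, inv_mul_cancel₀ h2ne, ← hx, x.mul_inv, one_smul]
    · rw [smul_mul_smul_comm, mul_inv_cancel₀ h2ne, ← hx, x.inv_mul, one_smul]
  have hgn : ‖g‖ ≤ 1 := by
    rw [hg_def, norm_smul]
    have h1 : ‖(2:ℂ)⁻¹‖ = 2⁻¹ := by
      rw [norm_inv]
      norm_num
    have h2 : ‖u + a‖ ≤ 2 := by
      have h3 := norm_add_le u a
      rw [hnorm_u] at h3
      linarith
    rw [h1]
    nlinarith [norm_nonneg (u + a)]
  obtain ⟨w₁, w₂, hw₁, hw₂, hsum⟩ := exists_two_unitaries hgu hgn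
  refine ⟨w₁, w₂, hw₁, hw₂, ?_⟩
  have hgg : g + g = u + a := by
    rw [hg_def, ← add_smul]
    have : (2:ℂ)⁻¹ + 2⁻¹ = 1 := by norm_num
    rw [this, one_smul]
  rw [hsum, hgg]

lemma exists_sum_unitaries (a : B) (ha : ‖a‖ < 1) (j : ℕ) :
    ∃ u : Fin (j + 2) → B, (∀ k, u k ∈ unitary B) ∧ ∑ k, u k = (j : ℂ) • a := by
  induction j with
  | zero =>
    refine ⟨![1, -1], ?_, ?_⟩
    · intro k
      fin_cases k
      · exact one_mem (unitary B)
      · rw [Unitary.mem_iff]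
        constructor <;> simp
    · simp [Fin.sum_univ_two]
  | succ j ih =>
    obtain ⟨u, hu, hsum⟩ := ih
    obtain ⟨w₁, w₂, hw₁, hw₂, hw⟩ := absorb_unitary (hu 0) ha
    refine ⟨Fin.cons w₁ (Fin.cons w₂ (fun k => u k.succ)), ?_, ?_⟩
    · intro k
      refine Fin.cases hw₁ (fun k' => ?_) k
      refine Fin.cases hw₂ (fun k'' => hu k''.succ) k'
    · rw [Fin.sum_cons, Fin.sum_cons]
      have htail : ∑ k : Fin (j + 1), u k.succ = (j : ℂ) • a - u 0 := by
        refine eq_sub_of_add_eq' ?_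
        rw [← Fin.sum_univ_succ u]
        exact hsum
      rw [htail]
      have hc : ((j + 1 : ℕ) : ℂ) = (j : ℂ) + 1 := by push_cast; ring
      rw [hc, add_smul, one_smul]
      calc w₁ + (w₂ + ((j:ℂ) • a - u 0)) = (w₁ + w₂) + ((j:ℂ) • a - u 0) := by abel
        _ = (u 0 + a) + ((j:ℂ) • a - u 0) := by rw [hw]
        _ = (j:ℂ) • a + a := by abel
end CStar
end CFCpieces

lemma exists_unitary_decomposition {B : Type*} [CStarAlgebra B] [PartialOrder B]
    [StarOrderedRing B] [Nontrivial B] (b : B) {ε : ℝ} (hε : 0 < ε) :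
    ∃ (c : ℝ) (N : ℕ) (u : Fin N → B), 0 < N ∧ (∀ k, u k ∈ unitary B) ∧
      ‖b‖ ≤ c ∧ c ≤ ‖b‖ + ε ∧ b = ((c / (N : ℝ) : ℝ) : ℂ) • ∑ k, u k := by
  set δ : ℝ := ε / 2 with hδ_def
  have hδ0 : 0 < δ := by positivity
  have hd0 : (0:ℝ) < ‖b‖ + δ := by positivity
  set a : B := (((‖b‖ + δ)⁻¹ : ℝ) : ℂ) • b with ha_def
  have han : ‖a‖ < 1 := by
    rw [ha_def, norm_smul, Complex.norm_real, Real.norm_eq_abs, abs_of_pos (by positivity)]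
    rw [inv_mul_lt_iff₀ hd0, mul_one]
    linarith [norm_nonneg b]
  set j : ℕ := ⌈2 * (‖b‖ + δ) / δ⌉₊ + 1 with hj_def
  have hj1 : 1 ≤ j := Nat.le_add_left 1 _
  have hjr0 : (0:ℝ) < (j:ℝ) := by positivity
  have hjb : 2 * (‖b‖ + δ) / δ ≤ (j:ℝ) := by
    calc 2 * (‖b‖ + δ) / δ ≤ (⌈2 * (‖b‖ + δ) / δ⌉₊ : ℝ) := Nat.le_ceil _
      _ ≤ (j : ℝ) := by
          rw [hj_def]
          push_cast
          linarith
  obtain ⟨u, hu, hsum⟩ := exists_sum_unitaries a han j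
  set c : ℝ := (‖b‖ + δ) * ((j:ℝ) + 2) / (j:ℝ) with hc_def
  have hNr : ((j + 2 : ℕ) : ℝ) = (j : ℝ) + 2 := by push_cast; ring
  refine ⟨c, j + 2, u, Nat.succ_pos _, hu, ?_, ?_, ?_⟩
  · rw [hc_def, le_div_iff₀ hjr0]
    nlinarith [norm_nonneg b]
  · have h1 : 2 * (‖b‖ + δ) ≤ δ * (j:ℝ) := by
      rw [div_le_iff₀ hδ0] at hjb
      linarith
    rw [hc_def, div_le_iff₀ hjr0]
    have hεδ : ‖b‖ + ε = ‖b‖ + 2 * δ := by rw [hδ_def]; ring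
    rw [hεδ]
    nlinarith
  · rw [hsum, ha_def, smul_smul, smul_smul]
    have hscalar : ((c / ((j+2:ℕ):ℝ) : ℝ) : ℂ) * ((j:ℕ) : ℂ) * (((‖b‖ + δ)⁻¹ : ℝ) : ℂ) = 1 := by
      have hre : (c / ((j:ℝ) + 2)) * (j : ℝ) * (‖b‖ + δ)⁻¹ = 1 := by
        have hne1 : (j:ℝ) ≠ 0 := hjr0.ne'
        have hne2 : (j:ℝ) + 2 ≠ 0 := by positivity
        have hne3 : ‖b‖ + δ ≠ 0 := hd0.ne'
        rw [hc_def]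
        field_simp
      rw [hNr]
      calc ((c / ((j:ℝ) + 2) : ℝ) : ℂ) * ((j:ℕ) : ℂ) * (((‖b‖ + δ)⁻¹ : ℝ) : ℂ)
          = (((c / ((j:ℝ) + 2)) * (j : ℝ) * (‖b‖ + δ)⁻¹ : ℝ) : ℂ) := by push_cast; ring
        _ = 1 := by rw [hre, Complex.ofReal_one]
    rw [hscalar, one_smul]

section ModuleLevel

lemma proj_apply_norm_le {P : E →L[ℂ] E}
    (hsym : ∀ z w : E, ⟪P z, w⟫_A = ⟪z, P w⟫_A) (hidem : P.comp P = P) (z : E) :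
    ‖P z‖ ≤ ‖z‖ := by
  rcases eq_or_lt_of_le (norm_nonneg (P z)) with h0 | h0
  · rw [← h0]; exact norm_nonneg z
  · have h1 : ‖P z‖ ^ 2 = ‖⟪P z, P z⟫_A‖ := CStarModule'.norm_sq_eq
    have h2 : ⟪P z, P z⟫_A = ⟪z, P z⟫_A := by
      have h3 : P (P z) = P z := DFunLike.congr_fun hidem z
      calc ⟪P z, P z⟫_A = ⟪z, P (P z)⟫_A := hsym z (P z)
        _ = ⟪z, P z⟫_A := by rw [h3]
    have h4 : ‖⟪z, P z⟫_A‖ ≤ ‖z‖ * ‖P z‖ := CStarModule'.norm_inner_le E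
    nlinarith [h1, h2 ▸ h1]

lemma hmn_bddAbove {n : ℕ} (x : Fin n → E) :
    BddAbove {r : ℝ | ∃ P : Fin n → E →L[ℂ] E,
      (∀ i, ∀ z w : E, ⟪(P i) z, w⟫_A = ⟪z, (P i) w⟫_A) ∧
      (∀ i, (P i).comp (P i) = P i) ∧
      (∀ i j, i ≠ j → (P i).comp (P j) = 0) ∧
      (∑ i, P i) = 1 ∧
      r = ‖∑ i, (P i) (x i)‖} := by
  refine ⟨∑ i, ‖x i‖, ?_⟩
  rintro r ⟨P, h1, h2, h3, h4, rfl⟩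
  calc ‖∑ i, (P i) (x i)‖ ≤ ∑ i, ‖(P i) (x i)‖ := norm_sum_le _ _
    _ ≤ ∑ i, ‖x i‖ := Finset.sum_le_sum fun i _ => proj_apply_norm_le (h1 i) (h2 i) (x i)

lemma hmn_nonneg {n : ℕ} (x : Fin n → E) : 0 ≤ hilbertMultiNorm (A := A) x := by
  refine Real.sSup_nonneg ?_
  rintro r ⟨P, h1, h2, h3, h4, rfl⟩
  exact norm_nonneg _

lemma hmn_ge {n : ℕ} (x : Fin n → E) (P : Fin n → E →L[ℂ] E)
    (h1 : ∀ i, ∀ z w : E, ⟪(P i) z, w⟫_A = ⟪z, (P i) w⟫_A)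
    (h2 : ∀ i, (P i).comp (P i) = P i)
    (h3 : ∀ i j, i ≠ j → (P i).comp (P j) = 0)
    (h4 : (∑ i, P i) = 1) :
    ‖∑ i, (P i) (x i)‖ ≤ hilbertMultiNorm (A := A) x :=
  le_csSup (hmn_bddAbove x) ⟨P, h1, h2, h3, h4, rfl⟩

lemma hmn_le {n : ℕ} (x : Fin n → E) {b : ℝ} (hb : 0 ≤ b)
    (h : ∀ P : Fin n → E →L[ℂ] E,
      (∀ i, ∀ z w : E, ⟪(P i) z, w⟫_A = ⟪z, (P i) w⟫_A) →
      (∀ i, (P i).comp (P i) = P i) →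
      (∀ i j, i ≠ j → (P i).comp (P j) = 0) →
      ((∑ i, P i) = 1) →
      ‖∑ i, (P i) (x i)‖ ≤ b) :
    hilbertMultiNorm (A := A) x ≤ b := by
  refine Real.sSup_le ?_ hb
  rintro r ⟨P, h1, h2, h3, h4, rfl⟩
  exact h P h1 h2 h3 h4

lemma unitary_bound {n : ℕ} (x : Fin n → E) (P : Fin n → E →L[ℂ] E)
    (h1 : ∀ i, ∀ z w : E, ⟪(P i) z, w⟫_A = ⟪z, (P i) w⟫_A)
    (h2 : ∀ i, (P i).comp (P i) = P i)
    (h3 : ∀ i j, i ≠ j → (P i).comp (P j) = 0)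
    (h4 : (∑ i, P i) = 1)
    (u : ↥𝓐) (hu : u ∈ unitary ↥𝓐) (z : E) :
    ‖∑ i, ⟪(u : E →L[ℂ] E) ((P i) z), x i⟫_A‖ ≤ ‖z‖ * hilbertMultiNorm (A := A) x := by
  set U : E →L[ℂ] E := (u : E →L[ℂ] E) with hU_def
  set U' : E →L[ℂ] E := ((star u : ↥𝓐) : E →L[ℂ] E) with hU'_def
  have hpair : ∀ a b : E, ⟪U a, b⟫_A = ⟪a, U' b⟫_A := fun a b => star_pair u a b
  have hpair' : ∀ a b : E, ⟪U' a, b⟫_A = ⟪a, U b⟫_A := fun a b => star_pair' u a b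
  have hU'U : ∀ w : E, U' (U w) = w := by
    intro w
    have hm := (Unitary.mem_iff.mp hu).1
    have := DFunLike.congr_fun (congrArg Subtype.val hm) w
    exact this
  have hUU' : ∀ w : E, U (U' w) = w := by
    intro w
    have hm := (Unitary.mem_iff.mp hu).2
    have := DFunLike.congr_fun (congrArg Subtype.val hm) w
    exact this
  set Q : Fin n → E →L[ℂ] E := fun i => (U.comp (P i)).comp U' with hQ_def
  have hQ_apply : ∀ i w, Q i w = U ((P i) (U' w)) := fun i w => rfl
  have hQ1 : ∀ i, ∀ a b : E, ⟪(Q i) a, b⟫_A = ⟪a, (Q i) b⟫_A := by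
    intro i a b
    rw [hQ_apply, hQ_apply]
    calc ⟪U ((P i) (U' a)), b⟫_A = ⟪(P i) (U' a), U' b⟫_A := hpair _ _
      _ = ⟪U' a, (P i) (U' b)⟫_A := h1 i _ _
      _ = ⟪a, U ((P i) (U' b))⟫_A := hpair' _ _
  have hQ2 : ∀ i, (Q i).comp (Q i) = Q i := by
    intro i
    ext w
    show U ((P i) (U' (U ((P i) (U' w))))) = U ((P i) (U' w))
    have hid := DFunLike.congr_fun (h2 i) (U' w)
    simp only [ContinuousLinearMap.comp_apply] at hid
    rw [hU'U, hid]
  have hQ3 : ∀ i j, i ≠ j → (Q i).comp (Q j) = 0 := by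
    intro i j hij
    ext w
    show U ((P i) (U' (U ((P j) (U' w))))) = 0
    rw [hU'U]
    have := DFunLike.congr_fun (h3 i j hij) (U' w)
    simp only [ContinuousLinearMap.comp_apply, ContinuousLinearMap.zero_apply] at this
    rw [this, map_zero]
  have hQ4 : (∑ i, Q i) = 1 := by
    ext w
    rw [ContinuousLinearMap.sum_apply]
    have hws : ∀ i, Q i w = U ((P i) (U' w)) := fun i => rfl
    calc ∑ i, Q i w = ∑ i, U ((P i) (U' w)) := by simp only [hws]
      _ = U (∑ i, (P i) (U' w)) := (map_sum U _ _).symm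
      _ = U ((∑ i, P i) (U' w)) := by rw [ContinuousLinearMap.sum_apply]
      _ = U (U' w) := by rw [h4]; rfl
      _ = w := hUU' w
    
  have hQle : ‖∑ i, (Q i) (x i)‖ ≤ hilbertMultiNorm (A := A) x := hmn_ge x Q hQ1 hQ2 hQ3 hQ4
  have hUz : ‖U z‖ = ‖z‖ := by
    rw [CStarModule'.norm_eq_sqrt_norm_inner_self (A := A) (x := U z),
      CStarModule'.norm_eq_sqrt_norm_inner_self (A := A) (x := z)]
    congr 2
    calc ⟪U z, U z⟫_A = ⟪z, U' (U z)⟫_A := hpair _ _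
      _ = ⟪z, z⟫_A := by rw [hU'U]
  have hkey : ∑ i, ⟪U ((P i) z), x i⟫_A = ⟪U z, ∑ i, (Q i) (x i)⟫_A := by
    rw [CStarModule'.inner_sum_right]
    congr 1
    funext i
    have hQU : (Q i) (U z) = U ((P i) z) := by
      rw [hQ_apply, hU'U]
    rw [← hQU, hQ1 i]
  rw [hkey]
  calc ‖⟪U z, ∑ i, (Q i) (x i)⟫_A‖ ≤ ‖U z‖ * ‖∑ i, (Q i) (x i)‖ := CStarModule'.norm_inner_le E
    _ = ‖z‖ * ‖∑ i, (Q i) (x i)‖ := by rw [hUz]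
    _ ≤ ‖z‖ * hilbertMultiNorm (A := A) x := by
        exact mul_le_mul_of_nonneg_left hQle (norm_nonneg z)

lemma key_ineq {n : ℕ} (T T' : E →L[ℂ] E)
    (hT : ∀ (a b : E), ⟪T a, b⟫_A = ⟪a, T' b⟫_A)
    (x : Fin n → E) (P : Fin n → E →L[ℂ] E)
    (h1 : ∀ i, ∀ z w : E, ⟪(P i) z, w⟫_A = ⟪z, (P i) w⟫_A)
    (h2 : ∀ i, (P i).comp (P i) = P i)
    (h3 : ∀ i j, i ≠ j → (P i).comp (P j) = 0)
    (h4 : (∑ i, P i) = 1) :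
    ‖∑ i, (P i) (T (x i))‖ ≤ ‖T‖ * hilbertMultiNorm (A := A) x := by
  rcases subsingleton_or_nontrivial E with hE | hE
  · have h0 : (∑ i, (P i) (T (x i))) = 0 := Subsingleton.elim _ _
    rw [h0, norm_zero]
    exact mul_nonneg (norm_nonneg T) (hmn_nonneg x)
  · have hmem : T ∈ 𝓐 := ⟨T', hT⟩
    set TT : ↥𝓐 := ⟨T, hmem⟩ with hTT_def
    haveI : Nontrivial ↥𝓐 := by
      obtain ⟨z0, hz0⟩ := exists_ne (0 : E)
      refine ⟨0, 1, fun hc => hz0 ?_⟩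
      have h := DFunLike.congr_fun (congrArg Subtype.val hc) z0
      simpa using h.symm
    set b : ↥𝓐 := star TT with hb_def
    have hbT' : (b : E →L[ℂ] E) = T' := by
      refine ext_of_inner_right (A := A) fun a c => ?_
      rw [← star_pair TT a c, hT a c]
    have hbnorm : ‖b‖ = ‖T‖ := by
      rw [hb_def, norm_adj_star]
      rfl
    set y : E := ∑ i, (P i) (T (x i)) with hy_def
    set M : ℝ := hilbertMultiNorm (A := A) x with hM_def
    have hM0 : 0 ≤ M := hmn_nonneg x
    have hyy : ⟪y, y⟫_A = ∑ i, ⟪T' ((P i) y), x i⟫_A := by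
      calc ⟪y, y⟫_A = ∑ i, ⟪y, (P i) (T (x i))⟫_A := by
            rw [hy_def, CStarModule'.inner_sum_right]
        _ = ∑ i, ⟪T' ((P i) y), x i⟫_A := by
            refine Finset.sum_congr rfl fun i _ => ?_
            calc ⟪y, (P i) (T (x i))⟫_A = ⟪(P i) y, T (x i)⟫_A := (h1 i y _).symm
              _ = star ⟪T (x i), (P i) y⟫_A := (CStarModule'.star_inner _ _).symm
              _ = star ⟪x i, T' ((P i) y)⟫_A := by rw [hT]
              _ = ⟪T' ((P i) y), x i⟫_A := CStarModule'.star_inner _ _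
    have main : ∀ ε : ℝ, 0 < ε → ‖y‖ ^ 2 ≤ (‖T‖ + ε) * (‖y‖ * M) := by
      intro ε hε
      obtain ⟨c, N, u, hN, hu, hc1, hc2, hdec⟩ := exists_unitary_decomposition b hε
      have hc0 : (0:ℝ) ≤ c := le_trans (norm_nonneg b) hc1
      have hNr0 : (0:ℝ) < (N:ℝ) := by exact_mod_cast hN
      have hT'eq : T' = ((c / (N : ℝ) : ℝ) : ℂ) • ∑ k, (u k : E →L[ℂ] E) := by
        rw [← hbT', hdec]
        rw [Subalgebra.coe_smul]
        congr 1
        exact map_sum ((adjointables A E).val) u Finset.univ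
      have hyy2 : ⟪y, y⟫_A
          = ((c / (N:ℝ) : ℝ) : ℂ) • ∑ k : Fin N, ∑ i, ⟪(u k : E →L[ℂ] E) ((P i) y), x i⟫_A := by
        rw [hyy]
        have hstep : ∀ i, ⟪T' ((P i) y), x i⟫_A
            = ((c / (N:ℝ) : ℝ) : ℂ) • ∑ k : Fin N, ⟪(u k : E →L[ℂ] E) ((P i) y), x i⟫_A := by
          intro i
          rw [hT'eq]
          simp only [ContinuousLinearMap.smul_apply, ContinuousLinearMap.sum_apply]
          rw [CStarModule'.inner_smul_left_complex, CStarModule'.inner_sum_left]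
          congr 1
          rw [Complex.star_def, Complex.conj_ofReal]
        calc ∑ i, ⟪T' ((P i) y), x i⟫_A
            = ∑ i, ((c / (N:ℝ) : ℝ) : ℂ) • ∑ k : Fin N, ⟪(u k : E →L[ℂ] E) ((P i) y), x i⟫_A := by
              exact Finset.sum_congr rfl fun i _ => hstep i
          _ = ((c / (N:ℝ) : ℝ) : ℂ) • ∑ i, ∑ k : Fin N, ⟪(u k : E →L[ℂ] E) ((P i) y), x i⟫_A := by
              rw [Finset.smul_sum]
          _ = ((c / (N:ℝ) : ℝ) : ℂ) • ∑ k : Fin N, ∑ i, ⟪(u k : E →L[ℂ] E) ((P i) y), x i⟫_A := by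
              rw [Finset.sum_comm]
      have hnorm : ‖y‖ ^ 2 ≤ (c / (N:ℝ)) * ((N:ℝ) * (‖y‖ * M)) := by
        have e1 : ‖y‖ ^ 2 = ‖⟪y, y⟫_A‖ := CStarModule'.norm_sq_eq
        rw [e1, hyy2, norm_smul]
        have e2 : ‖((c / (N:ℝ) : ℝ) : ℂ)‖ = c / (N:ℝ) := by
          rw [Complex.norm_real, Real.norm_eq_abs, abs_of_nonneg (by positivity)]
        rw [e2]
        refine mul_le_mul_of_nonneg_left ?_ (by positivity)
        calc ‖∑ k : Fin N, ∑ i, ⟪(u k : E →L[ℂ] E) ((P i) y), x i⟫_A‖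
            ≤ ∑ k : Fin N, ‖∑ i, ⟪(u k : E →L[ℂ] E) ((P i) y), x i⟫_A‖ := norm_sum_le _ _
          _ ≤ ∑ _k : Fin N, ‖y‖ * M := by
              refine Finset.sum_le_sum fun k _ => ?_
              exact unitary_bound x P h1 h2 h3 h4 (u k) (hu k) y
          _ = (N:ℝ) * (‖y‖ * M) := by
              rw [Finset.sum_const, Finset.card_univ, Fintype.card_fin, nsmul_eq_mul]
      have hcy : (c / (N:ℝ)) * ((N:ℝ) * (‖y‖ * M)) = c * (‖y‖ * M) := by
        field_simp
      rw [hcy] at hnorm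
      have hcT : c ≤ ‖T‖ + ε := by rw [← hbnorm]; exact hc2
      calc ‖y‖ ^ 2 ≤ c * (‖y‖ * M) := hnorm
        _ ≤ (‖T‖ + ε) * (‖y‖ * M) := by
            refine mul_le_mul_of_nonneg_right hcT ?_
            positivity
    rcases eq_or_lt_of_le (norm_nonneg y) with hy0 | hy0
    · rw [← hy0]
      exact mul_nonneg (norm_nonneg T) hM0
    · rcases eq_or_lt_of_le hM0 with hM0' | hMpos
      · exfalso
        have h := main 1 one_pos
        rw [← hM0'] at h
        nlinarith
      · refine le_of_forall_pos_le_add fun ε' hε' => ?_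
        have hMM : (ε' / M) * M = ε' := div_mul_cancel₀ ε' hMpos.ne'
        have h := main (ε' / M) (div_pos hε' hMpos)
        nlinarith [h, hMM]

lemma hmn_subsingleton [Subsingleton E] {n : ℕ} (x : Fin n → E) : hilbertMultiNorm (A := A) x = 0 := by
  refine le_antisymm ?_ (hmn_nonneg x)
  refine hmn_le x le_rfl fun P _ _ _ _ => ?_
  have h0 : (∑ i, (P i) (x i)) = 0 := Subsingleton.elim _ _
  rw [h0, norm_zero]

lemma hmn_one (x : Fin 1 → E) : hilbertMultiNorm (A := A) x = ‖x 0‖ := by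
  refine le_antisymm ?_ ?_
  · refine hmn_le x (norm_nonneg _) fun P hP1 hP2 hP3 hP4 => ?_
    have hP0 : P 0 = 1 := by
      rw [Fin.sum_univ_one] at hP4
      exact hP4
    rw [Fin.sum_univ_one, hP0, ContinuousLinearMap.one_apply]
  · refine le_csSup (hmn_bddAbove x) ?_
    refine ⟨fun _ => 1, ?_, ?_, ?_, ?_, ?_⟩
    · intro i z w
      simp only [ContinuousLinearMap.one_apply]
    · intro i
      ext z
      simp only [ContinuousLinearMap.comp_apply, ContinuousLinearMap.one_apply]
    · intro i j hij
      exact absurd (Subsingleton.elim i j) hij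
    · rw [Fin.sum_univ_one]
    · rw [Fin.sum_univ_one, ContinuousLinearMap.one_apply]

end ModuleLevel
end HMN

/-- For every adjointable `T : E → E` one has
`‖(Tx₁,…,Txₙ)‖ᴱₙ ≤ ‖T‖·‖(x₁,…,xₙ)‖ᴱₙ`, and the multi-bounded norm of `T` (the supremum over
`n` of the norms of the `n`-th amplifications) equals `‖T‖`. -/
theorem hilbertMultiNorm_amplification_eq_opNorm
    (T : E →L[ℂ] E) (T' : E →L[ℂ] E)
    (hT : ∀ (x y : E), ⟪T x, y⟫_A = ⟪x, T' y⟫_A) :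
    (∀ (n : ℕ) (x : Fin n → E),
        hilbertMultiNorm (A := A) (fun i => T (x i)) ≤ ‖T‖ * hilbertMultiNorm (A := A) x) ∧
    (⨆ n : ℕ, ⨆ x : {x : Fin n → E // hilbertMultiNorm (A := A) x ≤ 1},
        hilbertMultiNorm (A := A) (fun i => T ((x : Fin n → E) i))) = ‖T‖ := by
  have part1 : ∀ (n : ℕ) (x : Fin n → E),
      hilbertMultiNorm (A := A) (fun i => T (x i)) ≤ ‖T‖ * hilbertMultiNorm (A := A) x := by
    intro n x
    refine HMN.hmn_le _ (mul_nonneg (norm_nonneg T) (HMN.hmn_nonneg x)) fun P h1 h2 h3 h4 => ?_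
    exact HMN.key_ineq T T' hT x P h1 h2 h3 h4
  refine ⟨part1, ?_⟩
  rcases subsingleton_or_nontrivial E with hE | hE
  · have hT0 : ‖T‖ = 0 := by
      have hTz : T = 0 := ContinuousLinearMap.ext fun z => Subsingleton.elim _ _
      rw [hTz, norm_zero]
    rw [hT0]
    have hinner : ∀ n : ℕ, (⨆ x : {x : Fin n → E // hilbertMultiNorm (A := A) x ≤ 1},
        hilbertMultiNorm (A := A) (fun i => T ((x : Fin n → E) i))) = 0 := by
      intro n
      have hne : Nonempty {x : Fin n → E // hilbertMultiNorm (A := A) x ≤ 1} :=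
        ⟨⟨fun _ => 0, by rw [HMN.hmn_subsingleton]; norm_num⟩⟩
      calc (⨆ x : {x : Fin n → E // hilbertMultiNorm (A := A) x ≤ 1},
          hilbertMultiNorm (A := A) (fun i => T ((x : Fin n → E) i)))
          = ⨆ _x : {x : Fin n → E // hilbertMultiNorm (A := A) x ≤ 1}, (0:ℝ) := by
            congr 1
            funext x
            exact HMN.hmn_subsingleton _
        _ = 0 := ciSup_const
    calc (⨆ n : ℕ, ⨆ x : {x : Fin n → E // hilbertMultiNorm (A := A) x ≤ 1},
        hilbertMultiNorm (A := A) (fun i => T ((x : Fin n → E) i))) = ⨆ _n : ℕ, (0:ℝ) := by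
          congr 1
          funext n
          exact hinner n
      _ = 0 := ciSup_const
  · set F : ℕ → ℝ := fun n => ⨆ x : {x : Fin n → E // hilbertMultiNorm (A := A) x ≤ 1},
      hilbertMultiNorm (A := A) (fun i => T ((x : Fin n → E) i)) with hF_def
    have hptle : ∀ (n : ℕ) (x : {x : Fin n → E // hilbertMultiNorm (A := A) x ≤ 1}),
        hilbertMultiNorm (A := A) (fun i => T ((x : Fin n → E) i)) ≤ ‖T‖ := by
      intro n x
      calc hilbertMultiNorm (A := A) (fun i => T ((x : Fin n → E) i))
          ≤ ‖T‖ * hilbertMultiNorm (A := A) (x : Fin n → E) := part1 n x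
        _ ≤ ‖T‖ * 1 := mul_le_mul_of_nonneg_left x.2 (norm_nonneg T)
        _ = ‖T‖ := mul_one _
    have hFle : ∀ n, F n ≤ ‖T‖ := fun n => Real.iSup_le (hptle n) (norm_nonneg T)
    have hFbdd : BddAbove (Set.range F) := ⟨‖T‖, by rintro r ⟨n, rfl⟩; exact hFle n⟩
    have hinner_bdd : ∀ n : ℕ,
        BddAbove (Set.range (fun x : {x : Fin n → E // hilbertMultiNorm (A := A) x ≤ 1} =>
          hilbertMultiNorm (A := A) (fun i => T ((x : Fin n → E) i)))) := by
      intro n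
      refine ⟨‖T‖, ?_⟩
      rintro r ⟨x, rfl⟩
      exact hptle n x
    have hzero_mem : hilbertMultiNorm (A := A) (fun _ : Fin 1 => (0 : E)) ≤ 1 := by
      rw [HMN.hmn_one]
      simp
    have h00 : (0:ℝ) ≤ ⨆ n, F n := by
      have h01 : (0:ℝ) ≤ hilbertMultiNorm (A := A)
          (fun i => T (((⟨fun _ => 0, hzero_mem⟩ : {x : Fin 1 → E // hilbertMultiNorm (A := A) x ≤ 1})
            : Fin 1 → E) i)) := HMN.hmn_nonneg _
      have h02 := le_ciSup (hinner_bdd 1) (⟨fun _ => 0, hzero_mem⟩ :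
        {x : Fin 1 → E // hilbertMultiNorm (A := A) x ≤ 1})
      have h03 := le_ciSup hFbdd 1
      exact le_trans (le_trans h01 h02) h03
    refine le_antisymm (Real.iSup_le hFle (norm_nonneg T)) ?_
    refine T.opNorm_le_bound h00 fun z => ?_
    rcases eq_or_ne z 0 with rfl | hz
    · simp
    · have hzpos : 0 < ‖z‖ := norm_pos_iff.mpr hz
      set uvec : E := ‖z‖⁻¹ • z with huvec_def
      have hn1 : ‖uvec‖ = 1 := norm_smul_inv_norm hz
      set x1 : Fin 1 → E := fun _ => uvec with hx1_def
      have hx1 : hilbertMultiNorm (A := A) x1 ≤ 1 := by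
        rw [HMN.hmn_one]
        exact le_of_eq hn1
      have hval : hilbertMultiNorm (A := A) (fun i => T (x1 i)) = ‖T uvec‖ := by
        rw [HMN.hmn_one]
      have hF1 : ‖T uvec‖ ≤ F 1 := by
        rw [← hval]
        exact le_ciSup (hinner_bdd 1) (⟨x1, hx1⟩ : {x : Fin 1 → E // hilbertMultiNorm (A := A) x ≤ 1})
      have hS1 : F 1 ≤ ⨆ n, F n := le_ciSup hFbdd 1
      have hTu : ‖T uvec‖ = ‖z‖⁻¹ * ‖T z‖ := by
        have hmap : T uvec = ‖z‖⁻¹ • T z := by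
          rw [huvec_def, ContinuousLinearMap.map_smul_of_tower]
        rw [hmap, norm_smul, norm_inv, norm_norm]
      have hchain := le_trans hF1 hS1
      rw [hTu] at hchain
      calc ‖T z‖ = (‖z‖⁻¹ * ‖T z‖) * ‖z‖ := by field_simp
        _ ≤ (⨆ n, F n) * ‖z‖ := mul_le_mul_of_nonneg_right hchain hzpos.le
end
end

section
/- Let A be a C*-algebra, E and F Hilbert A-modules, and T : E → F adjointable. Then for every n ∈ ℕ and all x₁,…,xₙ ∈ E one has μₙ(Tx₁,…,Txₙ) ≤ ‖T‖·μₙ(x₁,…,xₙ), where μₙ on F is defined by the same formula as on E. -/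
open scoped InnerProductSpace RightActions

noncomputable section

/-- The definition of `CStarModule` as it stood in Mathlib of December 2024 (right modules). -/
class OldCStarModule (A : outParam <| Type*) (E : Type*) [NonUnitalSemiring A] [StarRing A] [Module ℂ A]
    [AddCommGroup E] [Module ℂ E] [PartialOrder A] [SMul Aᵐᵒᵖ E] [Norm A] [Norm E]
    extends Inner A E where
  inner_add_right {x} {y} {z} : inner x (y + z) = inner x y + inner x z
  inner_self_nonneg {x} : 0 ≤ inner x x
  inner_self {x} : inner x x = 0 ↔ x = 0
  inner_op_smul_right {a : A} {x y : E} : inner x (y <• a) = inner x y * a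
  inner_smul_right_complex {z : ℂ} {x} {y} : inner x (z • y) = z • inner x y
  star_inner x y : star (inner x y) = inner y x
  norm_eq_sqrt_norm_inner_self x : ‖x‖ = √‖inner x x‖

variable {A : Type*} [NonUnitalCStarAlgebra A] [PartialOrder A] [StarOrderedRing A]
variable {E : Type*} [NormedAddCommGroup E] [NormedSpace ℂ E] [SMul Aᵐᵒᵖ E]
  [OldCStarModule A E] [CompleteSpace E]
variable {F : Type*} [NormedAddCommGroup F] [NormedSpace ℂ F] [SMul Aᵐᵒᵖ F]
  [OldCStarModule A F] [CompleteSpace F]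

/-- `μₙ(x₁,…,xₙ) = sup { ‖Σᵢ ⟪xᵢ, y⟫⟪y, xᵢ⟫‖^(1/2) : y ∈ E, ‖y‖ ≤ 1 }`. -/
def mu {G : Type*} [NormedAddCommGroup G] [NormedSpace ℂ G] [SMul Aᵐᵒᵖ G]
    [OldCStarModule A G] {n : ℕ} (x : Fin n → G) : ℝ :=
  ⨆ y : {y : G // ‖y‖ ≤ 1}, Real.sqrt ‖∑ i, ⟪x i, (y : G)⟫_A * ⟪(y : G), x i⟫_A‖

namespace OldCStarModule

variable {G : Type*} [NormedAddCommGroup G] [NormedSpace ℂ G] [SMul Aᵐᵒᵖ G]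
  [OldCStarModule A G]

lemma inner_add_left {x y z : G} : ⟪x + y, z⟫_A = ⟪x, z⟫_A + ⟪y, z⟫_A := by
  rw [← OldCStarModule.star_inner z, OldCStarModule.inner_add_right, star_add,
    OldCStarModule.star_inner, OldCStarModule.star_inner]

lemma inner_zero_right {x : G} : ⟪x, (0 : G)⟫_A = 0 := by
  have h : ⟪x, (0 : G) + 0⟫_A = ⟪x, (0 : G)⟫_A + ⟪x, (0 : G)⟫_A :=
    OldCStarModule.inner_add_right
  rw [add_zero] at h
  exact (add_eq_left.mp h.symm)

lemma inner_zero_left {x : G} : ⟪(0 : G), x⟫_A = 0 := by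
  rw [← OldCStarModule.star_inner x, inner_zero_right, star_zero]

lemma inner_sub_right {x y z : G} : ⟪x, y - z⟫_A = ⟪x, y⟫_A - ⟪x, z⟫_A := by
  have h : ⟪x, (y - z) + z⟫_A = ⟪x, y - z⟫_A + ⟪x, z⟫_A := OldCStarModule.inner_add_right
  rw [sub_add_cancel] at h
  rw [h, add_sub_cancel_right]

lemma inner_sub_left {x y z : G} : ⟪x - y, z⟫_A = ⟪x, z⟫_A - ⟪y, z⟫_A := by
  rw [← OldCStarModule.star_inner z, inner_sub_right, star_sub,
    OldCStarModule.star_inner, OldCStarModule.star_inner]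

lemma inner_op_smul_left {a : A} {x y : G} : ⟪x <• a, y⟫_A = star a * ⟪x, y⟫_A := by
  rw [← OldCStarModule.star_inner y, OldCStarModule.inner_op_smul_right, star_mul,
    OldCStarModule.star_inner]

lemma inner_smul_right_real {z : ℝ} {x y : G} : ⟪x, z • y⟫_A = z • ⟪x, y⟫_A := by
  have h₁ : z • y = (z : ℂ) • y := by simp
  rw [h₁, OldCStarModule.inner_smul_right_complex]
  simp

lemma inner_smul_left_real {z : ℝ} {x y : G} : ⟪z • x, y⟫_A = z • ⟪x, y⟫_A := by
  rw [← OldCStarModule.star_inner y, inner_smul_right_real, star_smul, star_trivial,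
    OldCStarModule.star_inner]

lemma norm_sq_eq {x : G} : ‖x‖ ^ 2 = ‖⟪x, x⟫_A‖ := by
  rw [OldCStarModule.norm_eq_sqrt_norm_inner_self x, Real.sq_sqrt (norm_nonneg _)]

lemma inner_mul_inner_swap_le {x y : G} : ⟪y, x⟫_A * ⟪x, y⟫_A ≤ ‖x‖ ^ 2 • ⟪y, y⟫_A := by
  rcases eq_or_ne x 0 with h | h
  · simp [h, inner_zero_left, inner_zero_right]
  · have h₁ : ∀ (a : A),
        (0 : A) ≤ ‖x‖ ^ 2 • (star a * a) - ‖x‖ ^ 2 • (star a * ⟪x, y⟫_A)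
                  - ‖x‖ ^ 2 • (⟪y, x⟫_A * a) + ‖x‖ ^ 2 • (‖x‖ ^ 2 • ⟪y, y⟫_A) := fun a => by
      calc (0 : A) ≤ ⟪x <• a - ‖x‖ ^ 2 • y, x <• a - ‖x‖ ^ 2 • y⟫_A := by
                      exact OldCStarModule.inner_self_nonneg
            _ = star a * ⟪x, x⟫_A * a - ‖x‖ ^ 2 • (star a * ⟪x, y⟫_A)
                  - ‖x‖ ^ 2 • (⟪y, x⟫_A * a) + ‖x‖ ^ 2 • (‖x‖ ^ 2 • ⟪y, y⟫_A) := by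
                      simp only [inner_sub_right, OldCStarModule.inner_op_smul_right,
                        inner_sub_left, inner_op_smul_left, inner_smul_left_real, mul_sub,
                        mul_smul_comm, smul_mul_assoc, inner_smul_right_real, smul_sub, sub_mul,
                        mul_assoc]
                      abel
            _ ≤ ‖x‖ ^ 2 • (star a * a) - ‖x‖ ^ 2 • (star a * ⟪x, y⟫_A)
                  - ‖x‖ ^ 2 • (⟪y, x⟫_A * a) + ‖x‖ ^ 2 • (‖x‖ ^ 2 • ⟪y, y⟫_A) := by
                      gcongr
                      calc _ ≤ ‖⟪x, x⟫_A‖ • (star a * a) :=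
                          CStarAlgebra.star_left_conjugate_le_norm_smul
                            (hb := OldCStarModule.star_inner x x)
                        _ = ‖x‖ ^ 2 • (star a * a) := by rw [norm_sq_eq]
    specialize h₁ ⟪x, y⟫_A
    simp only [OldCStarModule.star_inner, sub_self, zero_sub, le_neg_add_iff_add_le,
      add_zero] at h₁
    rwa [smul_le_smul_iff_of_pos_left (pow_pos (norm_pos_iff.mpr h) _)] at h₁

variable (G) in
lemma norm_inner_le {x y : G} : ‖⟪x, y⟫_A‖ ≤ ‖x‖ * ‖y‖ := by
  have := calc ‖⟪x, y⟫_A‖ ^ 2 = ‖⟪y, x⟫_A * ⟪x, y⟫_A‖ := by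
                rw [← OldCStarModule.star_inner x, CStarRing.norm_star_mul_self, pow_two]
    _ ≤ ‖‖x‖ ^ 2 • ⟪y, y⟫_A‖ := by
                refine CStarAlgebra.norm_le_norm_of_nonneg_of_le ?_ inner_mul_inner_swap_le
                rw [← OldCStarModule.star_inner x]
                exact star_mul_self_nonneg ⟪x, y⟫_A
    _ = ‖x‖ ^ 2 * ‖⟪y, y⟫_A‖ := by simp [norm_smul]
    _ = ‖x‖ ^ 2 * ‖y‖ ^ 2 := by rw [norm_sq_eq (x := y)]
    _ = (‖x‖ * ‖y‖) ^ 2 := by simp only [mul_pow]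
  refine (pow_le_pow_iff_left₀ (norm_nonneg _) ?_ (by simp)).mp this
  positivity

end OldCStarModule

lemma mu_bddAbove {G : Type*} [NormedAddCommGroup G] [NormedSpace ℂ G] [SMul Aᵐᵒᵖ G]
    [OldCStarModule A G] [CompleteSpace G] {n : ℕ} (x : Fin n → G) :
    BddAbove (Set.range fun y : {y : G // ‖y‖ ≤ 1} =>
      Real.sqrt ‖∑ i, ⟪x i, (y : G)⟫_A * ⟪(y : G), x i⟫_A‖) := by
  refine ⟨Real.sqrt (∑ i, ‖x i‖ * ‖x i‖), ?_⟩
  rintro _ ⟨y, rfl⟩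
  apply Real.sqrt_le_sqrt
  calc ‖∑ i, ⟪x i, (y : G)⟫_A * ⟪(y : G), x i⟫_A‖
      ≤ ∑ i, ‖⟪x i, (y : G)⟫_A * ⟪(y : G), x i⟫_A‖ := norm_sum_le _ _
    _ ≤ ∑ i, ‖x i‖ * ‖x i‖ := by
        refine Finset.sum_le_sum fun i _ => ?_
        have h1 : ‖⟪x i, (y : G)⟫_A‖ ≤ ‖x i‖ := by
          calc ‖⟪x i, (y : G)⟫_A‖ ≤ ‖x i‖ * ‖(y : G)‖ := OldCStarModule.norm_inner_le G
            _ ≤ ‖x i‖ * 1 := by gcongr; exact y.2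
            _ = ‖x i‖ := mul_one _
        have h2 : ‖⟪(y : G), x i⟫_A‖ ≤ ‖x i‖ := by
          rw [← OldCStarModule.star_inner, norm_star]; exact h1
        calc ‖⟪x i, (y : G)⟫_A * ⟪(y : G), x i⟫_A‖
            ≤ ‖⟪x i, (y : G)⟫_A‖ * ‖⟪(y : G), x i⟫_A‖ := norm_mul_le _ _
          _ ≤ ‖x i‖ * ‖x i‖ := by
              exact mul_le_mul h1 h2 (norm_nonneg _) (norm_nonneg _)

lemma mu_nonneg {G : Type*} [NormedAddCommGroup G] [NormedSpace ℂ G] [SMul Aᵐᵒᵖ G]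
    [OldCStarModule A G] {n : ℕ} (x : Fin n → G) : 0 ≤ mu x :=
  Real.iSup_nonneg fun _ => Real.sqrt_nonneg _

/-- For an adjointable map `T : E → F` one has `μₙ(Tx₁,…,Txₙ) ≤ ‖T‖·μₙ(x₁,…,xₙ)`. -/
theorem mu_comp_le (T : E →L[ℂ] F) (T' : F →L[ℂ] E)
    (hT : ∀ (x : E) (y : F), ⟪T x, y⟫_A = ⟪x, T' y⟫_A)
    (n : ℕ) (x : Fin n → E) :
    mu (fun i => T (x i)) ≤ ‖T‖ * mu x := by
  -- ‖T' y‖ ≤ ‖T‖ * ‖y‖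
  have hT'norm : ∀ y : F, ‖T' y‖ ≤ ‖T‖ * ‖y‖ := by
    intro y
    rcases eq_or_ne (T' y) 0 with h | h
    · rw [h, norm_zero]; positivity
    · have hpos : 0 < ‖T' y‖ := norm_pos_iff.mpr h
      have key : ‖T' y‖ ^ 2 ≤ ‖T‖ * ‖T' y‖ * ‖y‖ := by
        calc ‖T' y‖ ^ 2 = ‖⟪T' y, T' y⟫_A‖ := OldCStarModule.norm_sq_eq
          _ = ‖⟪T (T' y), y⟫_A‖ := by rw [hT]
          _ ≤ ‖T (T' y)‖ * ‖y‖ := OldCStarModule.norm_inner_le F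
          _ ≤ (‖T‖ * ‖T' y‖) * ‖y‖ := by gcongr; exact T.le_opNorm _
      nlinarith
  haveI : Nonempty {y : F // ‖y‖ ≤ 1} := ⟨⟨0, by simp⟩⟩
  refine ciSup_le fun y => ?_
  -- rewrite inner products via the adjoint
  have hrw : ∀ i, ⟪T (x i), (y : F)⟫_A * ⟪(y : F), T (x i)⟫_A
      = ⟪x i, T' y⟫_A * ⟪T' y, x i⟫_A := by
    intro i
    rw [hT, ← OldCStarModule.star_inner (T (x i)), hT, OldCStarModule.star_inner]
  simp only [hrw]
  rcases eq_or_ne (T' (y : F)) 0 with h | h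
  · simp only [h, OldCStarModule.inner_zero_right, OldCStarModule.inner_zero_left, zero_mul,
      Finset.sum_const_zero, norm_zero, Real.sqrt_zero]
    exact mul_nonneg (norm_nonneg _) (mu_nonneg x)
  · set c : ℝ := ‖T' (y : F)‖ with hc
    have hcpos : 0 < c := norm_pos_iff.mpr h
    set z : E := c⁻¹ • T' (y : F) with hz
    have hznorm : ‖z‖ ≤ 1 := by
      rw [hz, norm_smul, norm_inv, Real.norm_eq_abs, abs_of_pos hcpos]
      rw [← hc, inv_mul_cancel₀ hcpos.ne']
    have hzy : T' (y : F) = c • z := by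
      rw [hz, smul_smul, mul_inv_cancel₀ hcpos.ne', one_smul]
    have hsum : ∀ i, ⟪x i, T' (y : F)⟫_A * ⟪T' (y : F), x i⟫_A
        = (c * c) • (⟪x i, z⟫_A * ⟪z, x i⟫_A) := by
      intro i
      rw [hzy, OldCStarModule.inner_smul_right_real, OldCStarModule.inner_smul_left_real,
        smul_mul_assoc, mul_smul_comm, smul_smul]
    simp only [hsum, ← Finset.smul_sum]
    rw [norm_smul, Real.norm_eq_abs, abs_of_pos (by positivity),
      Real.sqrt_mul (by positivity), Real.sqrt_mul_self hcpos.le]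
    have hle1 : c ≤ ‖T‖ := by
      calc c ≤ ‖T‖ * ‖(y : F)‖ := hT'norm _
        _ ≤ ‖T‖ * 1 := by gcongr; exact y.2
        _ = ‖T‖ := mul_one _
    have hle2 : Real.sqrt ‖∑ i, ⟪x i, z⟫_A * ⟪z, x i⟫_A‖ ≤ mu x :=
      le_ciSup (mu_bddAbove x) (⟨z, hznorm⟩ : {y : E // ‖y‖ ≤ 1})
    exact mul_le_mul hle1 hle2 (Real.sqrt_nonneg _) (norm_nonneg _)
end
end

section
/- Let A be a unital C*-algebra, E a Hilbert A-module, n ∈ ℕ, and x₁,…,xₙ ∈ E not all zero. Then μ*ₙ(x₁,…,xₙ) = min{ λ > 0 : (Σᵢ₌₁ⁿ ⟨x,xᵢ⟩⟨xᵢ,x⟩)^{1/2} ≤ λ·⟨x,x⟩^{1/2} for all x ∈ E }, where b^{1/2} denotes the positive square root of a positive element b of A (continuous functional calculus) and ≤ is the canonical order on self-adjoint elements of A; in particular the infimum of this set is attained. -/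
open scoped InnerProductSpace RightActions

open scoped NNReal ENNReal
open Filter Topology

noncomputable section

/-- The Hilbert C⋆-module class as `CStarModule` was defined in Mathlib (Dec 2024): a right
`A`-module (action of `Aᵐᵒᵖ`) whose `A`-valued inner product satisfies `⟪x, y <• a⟫ = ⟪x, y⟫ * a`. -/
class RightCStarModule (A E : Type*) [NonUnitalSemiring A] [StarRing A] [Module ℂ A]
    [AddCommGroup E] [Module ℂ E] [PartialOrder A] [SMul Aᵐᵒᵖ E] [Norm A] [Norm E]
    extends Inner A E where
  inner_add_right {x} {y} {z} : inner x (y + z) = inner x y + inner x z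
  inner_self_nonneg {x} : 0 ≤ inner x x
  inner_self {x} : inner x x = 0 ↔ x = 0
  inner_op_smul_right {a : A} {x y : E} : inner x (y <• a) = inner x y * a
  inner_smul_right_complex {z : ℂ} {x} {y} : inner x (z • y) = z • inner x y
  star_inner x y : star (inner x y) = inner y x
  norm_eq_sqrt_norm_inner_self x : ‖x‖ = √‖inner x x‖

variable {A : Type*} [CStarAlgebra A] [PartialOrder A] [StarOrderedRing A]
variable {E : Type*} [NormedAddCommGroup E] [NormedSpace ℂ E] [SMul Aᵐᵒᵖ E]
  [RightCStarModule A E] [CompleteSpace E]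

/-- `μ*ₙ(x₁,…,xₙ) = sup { ‖Σᵢ ⟪y, xᵢ⟫⟪xᵢ, y⟫‖^(1/2) : y ∈ E, ‖y‖ ≤ 1 }`. -/
def muStar {n : ℕ} (x : Fin n → E) : ℝ :=
  ⨆ y : {y : E // ‖y‖ ≤ 1}, Real.sqrt ‖∑ i, ⟪(y : E), x i⟫_A * ⟪x i, (y : E)⟫_A‖

namespace RightCStarModule

lemma inner_add_left {x y z : E} : ⟪x + y, z⟫_A = ⟪x, z⟫_A + ⟪y, z⟫_A := by
  rw [← star_star (r := ⟪x + y, z⟫_A)]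
  simp only [inner_add_right, star_add, star_inner]

lemma inner_op_smul_left {a : A} {x y : E} : ⟪x <• a, y⟫_A = star a * ⟪x, y⟫_A := by
  rw [← star_inner, inner_op_smul_right, star_mul, star_inner]

lemma inner_smul_left_complex {z : ℂ} {x y : E} : ⟪z • x, y⟫_A = star z • ⟪x, y⟫_A := by
  rw [← star_inner, inner_smul_right_complex, star_smul, star_inner]

lemma inner_smul_left_real {z : ℝ} {x y : E} : ⟪z • x, y⟫_A = z • ⟪x, y⟫_A := by
  have h₁ : z • x = (z : ℂ) • x := by simp
  rw [h₁, inner_smul_left_complex]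
  simp

lemma inner_smul_right_real {z : ℝ} {x y : E} : ⟪x, z • y⟫_A = z • ⟪x, y⟫_A := by
  have h₁ : z • y = (z : ℂ) • y := by simp
  rw [h₁, inner_smul_right_complex]
  simp

@[simp] lemma inner_zero_left {x : E} : ⟪0, x⟫_A = 0 := by
  have h := inner_add_left (A := A) (x := (0 : E)) (y := 0) (z := x)
  rw [add_zero] at h
  simpa using h

@[simp] lemma inner_zero_right {x : E} : ⟪x, 0⟫_A = 0 := by
  have h := inner_add_right (A := A) (x := x) (y := (0 : E)) (z := 0)
  rw [add_zero] at h
  simpa using h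

lemma inner_sub_right {x y z : E} : ⟪x, y - z⟫_A = ⟪x, y⟫_A - ⟪x, z⟫_A := by
  rw [eq_sub_iff_add_eq, ← inner_add_right, sub_add_cancel]

lemma inner_sub_left {x y z : E} : ⟪x - y, z⟫_A = ⟪x, z⟫_A - ⟪y, z⟫_A := by
  rw [eq_sub_iff_add_eq, ← inner_add_left, sub_add_cancel]

lemma norm_sq_eq {x : E} : ‖x‖ ^ 2 = ‖⟪x, x⟫_A‖ := by
  rw [norm_eq_sqrt_norm_inner_self (A := A) x, Real.sq_sqrt (norm_nonneg _)]

lemma inner_mul_inner_swap_le {x y : E} : ⟪y, x⟫_A * ⟪x, y⟫_A ≤ ‖x‖ ^ 2 • ⟪y, y⟫_A := by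
  rcases eq_or_ne x 0 with h | h
  · simp [h]
  · have hx : 0 < ‖x‖ := norm_pos_iff.mpr h
    have h₁ : ∀ (a : A),
        (0 : A) ≤ ‖x‖ ^ 2 • (star a * a) - ‖x‖ ^ 2 • (star a * ⟪x, y⟫_A)
                  - ‖x‖ ^ 2 • (⟪y, x⟫_A * a) + ‖x‖ ^ 2 • (‖x‖ ^ 2 • ⟪y, y⟫_A) := fun a => by
      calc (0 : A) ≤ ⟪x <• a - ‖x‖ ^ 2 • y, x <• a - ‖x‖ ^ 2 • y⟫_A := by
                      exact inner_self_nonneg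
            _ = star a * ⟪x, x⟫_A * a - ‖x‖ ^ 2 • (star a * ⟪x, y⟫_A)
                  - ‖x‖ ^ 2 • (⟪y, x⟫_A * a) + ‖x‖ ^ 2 • (‖x‖ ^ 2 • ⟪y, y⟫_A) := by
                      simp only [inner_sub_right, inner_op_smul_right, inner_sub_left,
                        inner_op_smul_left, inner_smul_left_real, mul_sub, sub_mul, mul_smul_comm,
                        smul_mul_assoc, inner_smul_right_real, smul_sub, mul_assoc]
                      abel
            _ ≤ ‖x‖ ^ 2 • (star a * a) - ‖x‖ ^ 2 • (star a * ⟪x, y⟫_A)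
                  - ‖x‖ ^ 2 • (⟪y, x⟫_A * a) + ‖x‖ ^ 2 • (‖x‖ ^ 2 • ⟪y, y⟫_A) := by
                      gcongr
                      calc _ ≤ ‖⟪x, x⟫_A‖ • (star a * a) :=
                          CStarAlgebra.star_left_conjugate_le_norm_smul (star_inner x x)
                        _ = ‖x‖ ^ 2 • (star a * a) := by rw [norm_sq_eq (A := A)]
    specialize h₁ ⟪x, y⟫_A
    simp only [star_inner, sub_self, zero_sub, le_neg_add_iff_add_le, add_zero] at h₁
    rwa [smul_le_smul_iff_of_pos_left (pow_pos hx _)] at h₁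

variable (E) in
lemma norm_inner_le {x y : E} : ‖⟪x, y⟫_A‖ ≤ ‖x‖ * ‖y‖ := by
  have := calc ‖⟪x, y⟫_A‖ ^ 2 = ‖⟪y, x⟫_A * ⟪x, y⟫_A‖ := by
                rw [← star_inner x, CStarRing.norm_star_mul_self, pow_two]
    _ ≤ ‖‖x‖ ^ 2 • ⟪y, y⟫_A‖ := by
                refine CStarAlgebra.norm_le_norm_of_nonneg_of_le ?_ inner_mul_inner_swap_le
                rw [← star_inner x]
                exact star_mul_self_nonneg _
    _ = ‖x‖ ^ 2 * ‖⟪y, y⟫_A‖ := by simp [norm_smul]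
    _ = ‖x‖ ^ 2 * ‖y‖ ^ 2 := by rw [← norm_sq_eq (A := A) (x := y)]
    _ = (‖x‖ * ‖y‖) ^ 2 := by ring
  exact (pow_le_pow_iff_left₀ (norm_nonneg _) (by positivity) (by norm_num : (2 : ℕ) ≠ 0)).mp this

end RightCStarModule

namespace muStarAux

omit [PartialOrder A] [StarOrderedRing A] in
lemma spectralRadius_mul_comm (u v : A) :
    spectralRadius ℂ (u * v) = spectralRadius ℂ (v * u) := by
  have key : ∀ p q : A, spectralRadius ℂ (p * q) ≤ spectralRadius ℂ (q * p) := by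
    intro p q
    unfold spectralRadius
    refine iSup₂_le fun k hk => ?_
    rcases eq_or_ne k 0 with rfl | hk0
    · simp
    · have hk' : k ∈ spectrum ℂ (q * p) := by
        have h2 := (spectrum.unit_mem_mul_comm
          (a := p) (b := q) (r := Units.mk0 k hk0)).mp (by simpa using hk)
        simpa using h2
      exact le_iSup₂ (f := fun k (_ : k ∈ spectrum ℂ (q * p)) => (‖k‖₊ : ℝ≥0∞)) k hk'
  exact le_antisymm (key u v) (key v u)

/-- Operator monotonicity of the square root, for an invertible dominating element. -/
lemma sqrt_le_sqrt_of_isUnit {a b : A} (hb : IsUnit b) (ha : 0 ≤ a) (hb' : 0 ≤ b)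
    (hab : a ≤ b) : CFC.sqrt a ≤ CFC.sqrt b := by
  rcases subsingleton_or_nontrivial A with hsub | hnt
  · exact le_of_eq (Subsingleton.elim _ _)
  have hs : 0 ≤ CFC.sqrt b := CFC.sqrt_nonneg (a := b)
  have hss : CFC.sqrt b * CFC.sqrt b = b := CFC.sqrt_mul_sqrt_self b hb'
  set s := CFC.sqrt b with hs_def
  set B := hb.unit with hB_def
  have hB : (B : A) = b := hb.unit_spec
  have hcomm : Commute s (B : A) := by
    rw [Commute, SemiconjBy, hB, ← hss, mul_assoc]
  have hcomm' := hcomm.units_inv_right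
  have p1 : s * (s * (↑B⁻¹ : A)) = 1 := by
    rw [← mul_assoc, hss, ← hB, B.mul_inv]
  have p2 : (s * (↑B⁻¹ : A)) * s = 1 := by
    rw [mul_assoc, ← hcomm'.eq, p1]
  set S : Aˣ := ⟨s, s * (↑B⁻¹ : A), p1, p2⟩ with hS_def
  have hSval : (S : A) = s := rfl
  have hSinv : 0 ≤ (↑S⁻¹ : A) := CFC.inv_nonneg_of_nonneg S hs
  have hSS : S * S = B := by
    ext
    simpa [hS_def] using hss.trans hB.symm
  have hq : (↑S⁻¹ : A) * (↑S⁻¹ : A) = (↑B⁻¹ : A) := by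
    rw [← Units.val_mul, ← mul_inv_rev, ← hSS]
  have hsqrtBinv : CFC.sqrt (↑B⁻¹ : A) = (↑S⁻¹ : A) := CFC.sqrt_unique hq hSinv
  have h1 : ‖CFC.sqrt a * (↑S⁻¹ : A)‖ ≤ 1 := by
    have := (le_iff_norm_sqrt_mul_sqrt_inv (b := B) ha (hB ▸ hb')).mp (hB ▸ hab)
    rwa [hsqrtBinv] at this
  refine (le_iff_norm_sqrt_mul_sqrt_inv (b := S) (CFC.sqrt_nonneg (a := a)) hs).mpr ?_
  set c := CFC.sqrt (CFC.sqrt a) with hc_def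
  set q := CFC.sqrt (↑S⁻¹ : A) with hq_def
  have hcn : 0 ≤ c := CFC.sqrt_nonneg _
  have hqn : 0 ≤ q := CFC.sqrt_nonneg _
  have hcc : c * c = CFC.sqrt a := CFC.sqrt_mul_sqrt_self _ (CFC.sqrt_nonneg (a := a))
  have hqq : q * q = (↑S⁻¹ : A) := CFC.sqrt_mul_sqrt_self _ hSinv
  have hnorm_sq : ‖c * q‖ * ‖c * q‖ = ‖q * CFC.sqrt a * q‖ := by
    rw [← CStarRing.norm_star_mul_self (x := c * q), star_mul,
      (IsSelfAdjoint.of_nonneg hqn).star_eq, (IsSelfAdjoint.of_nonneg hcn).star_eq]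
    congr 1
    rw [mul_assoc, ← mul_assoc c c q, ← mul_assoc, hcc]
  have hp : 0 ≤ q * CFC.sqrt a * q :=
    conjugate_nonneg_of_nonneg (CFC.sqrt_nonneg (a := a)) hqn
  have hrad : (‖q * CFC.sqrt a * q‖₊ : ℝ≥0∞) ≤ 1 := by
    calc (‖q * CFC.sqrt a * q‖₊ : ℝ≥0∞)
        = spectralRadius ℂ (q * CFC.sqrt a * q) :=
          ((IsSelfAdjoint.of_nonneg hp).spectralRadius_eq_nnnorm).symm
      _ = spectralRadius ℂ (q * (CFC.sqrt a * q)) := by rw [mul_assoc]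
      _ = spectralRadius ℂ ((CFC.sqrt a * q) * q) :=
          muStarAux.spectralRadius_mul_comm _ _
      _ = spectralRadius ℂ (CFC.sqrt a * (↑S⁻¹ : A)) := by rw [mul_assoc, hqq]
      _ ≤ (‖CFC.sqrt a * (↑S⁻¹ : A)‖₊ : ℝ≥0∞) := spectrum.spectralRadius_le_nnnorm _
      _ ≤ 1 := by
          rw [← ENNReal.coe_one, ENNReal.coe_le_coe, ← NNReal.coe_le_coe]
          simpa using h1
  have hple : ‖q * CFC.sqrt a * q‖ ≤ 1 := by
    rw [← ENNReal.coe_one, ENNReal.coe_le_coe, ← NNReal.coe_le_coe] at hrad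
    simpa using hrad
  nlinarith [norm_nonneg (c * q), hnorm_sq]

lemma sqrt_add_le (b : A) (hb : 0 ≤ b) (ε : ℝ≥0) :
    CFC.sqrt (b + algebraMap ℝ≥0 A ε) ≤ CFC.sqrt b + algebraMap ℝ≥0 A (NNReal.sqrt ε) := by
  have h1 : b + algebraMap ℝ≥0 A ε = cfc (fun t : ℝ≥0 => t + ε) b := by
    rw [cfc_add b (fun t : ℝ≥0 => t) (fun _ => ε), cfc_id' (R := ℝ≥0) b, cfc_const ε b]
  have h2 : CFC.sqrt (b + algebraMap ℝ≥0 A ε)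
      = cfc (fun t : ℝ≥0 => NNReal.sqrt (t + ε)) b := by
    rw [h1, CFC.sqrt_eq_cfc, ← cfc_comp' NNReal.sqrt (fun t : ℝ≥0 => t + ε) b
      NNReal.continuous_sqrt.continuousOn]
  rw [h2]
  calc cfc (fun t : ℝ≥0 => NNReal.sqrt (t + ε)) b
      ≤ cfc (fun t : ℝ≥0 => NNReal.sqrt t + NNReal.sqrt ε) b := by
        refine cfc_mono fun t _ => ?_
        rw [NNReal.sqrt_le_iff_le_sq, add_sq, NNReal.sq_sqrt, NNReal.sq_sqrt]
        exact add_le_add_left (le_add_of_nonneg_right (zero_le)) ε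
    _ = CFC.sqrt b + algebraMap ℝ≥0 A (NNReal.sqrt ε) := by
        rw [cfc_add b _ (fun _ => NNReal.sqrt ε), cfc_const _ b, CFC.sqrt_eq_cfc]

/-- If `x ≤ y + ε • 1` for every positive real `ε`, then `x ≤ y`. -/
lemma le_of_forall_le_add_smul_one (x y : A)
    (h : ∀ ε : ℝ, 0 < ε → x ≤ y + ε • (1 : A)) : x ≤ y := by
  rw [← sub_nonneg]
  have hmem : ∀ k : ℕ, y + (1 / ((k : ℝ) + 1)) • (1 : A) - x ∈ {a : A | 0 ≤ a} := by
    intro k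
    have hε : (0 : ℝ) < 1 / ((k : ℝ) + 1) := by positivity
    rw [Set.mem_setOf_eq, sub_nonneg]
    exact h _ hε
  have hlim : Tendsto (fun k : ℕ => y + (1 / ((k : ℝ) + 1)) • (1 : A) - x) atTop
      (𝓝 (y - x)) := by
    have h1 : Tendsto (fun k : ℕ => 1 / ((k : ℝ) + 1)) atTop (𝓝 0) :=
      tendsto_one_div_add_atTop_nhds_zero_nat
    have h2 : Tendsto (fun k : ℕ => (1 / ((k : ℝ) + 1)) • (1 : A)) atTop (𝓝 0) := by
      simpa using h1.smul_const (1 : A)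
    have h3 := (tendsto_const_nhds (x := y) (f := atTop)).add h2
    simpa using h3.sub (tendsto_const_nhds (x := x) (f := atTop))
  exact CStarAlgebra.isClosed_nonneg.mem_of_tendsto hlim (Filter.Eventually.of_forall hmem)

/-- Operator monotonicity of the square root. -/
lemma sqrt_le_sqrt {a b : A} (ha : 0 ≤ a) (hab : a ≤ b) :
    CFC.sqrt a ≤ CFC.sqrt b := by
  have hb : 0 ≤ b := ha.trans hab
  have key : ∀ ε : ℝ≥0, 0 < ε →
      CFC.sqrt a ≤ CFC.sqrt b + algebraMap ℝ≥0 A (NNReal.sqrt ε) := by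
    intro ε hε
    have hεA : (0 : A) ≤ algebraMap ℝ≥0 A ε := by
      rw [← cfc_const ε (0 : A)]
      exact cfc_predicate _ _
    have hεunit : IsUnit (algebraMap ℝ≥0 A ε) :=
      (isUnit_iff_ne_zero.mpr hε.ne').map (algebraMap ℝ≥0 A)
    have hunit : IsUnit (b + algebraMap ℝ≥0 A ε) :=
      CStarAlgebra.isUnit_of_le _ (le_add_of_nonneg_left hb) (hεunit.isStrictlyPositive hεA)
    have h1 : CFC.sqrt a ≤ CFC.sqrt (b + algebraMap ℝ≥0 A ε) :=
      sqrt_le_sqrt_of_isUnit hunit ha (add_nonneg hb hεA)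
        (hab.trans (le_add_of_nonneg_right hεA))
    exact h1.trans (sqrt_add_le b hb ε)
  refine le_of_forall_le_add_smul_one _ _ fun ε hε => ?_
  have h2 := key (ε.toNNReal ^ 2) (pow_pos (Real.toNNReal_pos.mpr hε) 2)
  rwa [NNReal.sqrt_sq, Algebra.algebraMap_eq_smul_one, NNReal.smul_def,
    Real.coe_toNNReal ε hε.le] at h2

end muStarAux

/-- For a unital `A` and `x₁,…,xₙ ∈ E` not all zero, `μ*ₙ(x₁,…,xₙ)` is the least element of
`{λ > 0 : (Σᵢ ⟪x, xᵢ⟫⟪xᵢ, x⟫)^(1/2) ≤ λ·⟪x, x⟫^(1/2) for all x ∈ E}`, where square roots are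
taken via the continuous functional calculus; in particular the infimum of this set is
attained. -/
theorem muStar_isLeast {n : ℕ} (x : Fin n → E) (hx : x ≠ 0) :
    IsLeast {l : ℝ | 0 < l ∧ ∀ z : E,
        CFC.sqrt (∑ i, ⟪z, x i⟫_A * ⟪x i, z⟫_A) ≤ l • CFC.sqrt ⟪z, z⟫_A}
      (muStar (A := A) x) := by
  classical
  haveI : Nonempty {y : E // ‖y‖ ≤ 1} := ⟨⟨0, by simp⟩⟩
  set b : E → A := fun z => ∑ i, ⟪z, x i⟫_A * ⟪x i, z⟫_A with hb_def
  have hb_nonneg : ∀ z, 0 ≤ b z := by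
    intro z
    refine Finset.sum_nonneg fun i _ => ?_
    rw [← RightCStarModule.star_inner (x i) z]
    exact star_mul_self_nonneg _
  have hmuStar : muStar (A := A) x = ⨆ y : {y : E // ‖y‖ ≤ 1}, Real.sqrt ‖b (y : E)‖ := rfl
  -- boundedness of the sup
  have hbdd : BddAbove (Set.range fun y : {y : E // ‖y‖ ≤ 1} => Real.sqrt ‖b (y : E)‖) := by
    refine ⟨Real.sqrt (∑ i, ‖x i‖ ^ 2), ?_⟩
    rintro r ⟨⟨y, hy⟩, rfl⟩
    refine Real.sqrt_le_sqrt ?_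
    calc ‖b y‖ ≤ ∑ i, ‖⟪y, x i⟫_A * ⟪x i, y⟫_A‖ := norm_sum_le _ _
      _ ≤ ∑ i, ‖x i‖ ^ 2 := by
          refine Finset.sum_le_sum fun i _ => ?_
          calc ‖⟪y, x i⟫_A * ⟪x i, y⟫_A‖ ≤ ‖⟪y, x i⟫_A‖ * ‖⟪x i, y⟫_A‖ := norm_mul_le _ _
            _ ≤ (‖y‖ * ‖x i‖) * (‖x i‖ * ‖y‖) :=
                mul_le_mul (RightCStarModule.norm_inner_le E) (RightCStarModule.norm_inner_le E)
                  (norm_nonneg _) (by positivity)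
            _ ≤ ‖x i‖ ^ 2 := by
                have hy2 : ‖y‖ * ‖y‖ ≤ 1 := mul_le_one₀ hy (norm_nonneg y) hy
                nlinarith [hy2, sq_nonneg ‖x i‖, norm_nonneg (x i), norm_nonneg y]
  have hle_sup : ∀ y : E, ‖y‖ ≤ 1 → Real.sqrt ‖b y‖ ≤ muStar (A := A) x := by
    intro y hy
    rw [hmuStar]
    exact le_ciSup hbdd ⟨y, hy⟩
  have hmu_nonneg : 0 ≤ muStar (A := A) x :=
    (Real.sqrt_nonneg ‖b 0‖).trans (hle_sup 0 (by simp))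
  -- norm bound : ‖b u‖ ≤ μ² ‖u‖²
  have hm : ∀ u : E, ‖b u‖ ≤ muStar (A := A) x ^ 2 * ‖u‖ ^ 2 := by
    intro u
    rcases eq_or_ne u 0 with rfl | hu
    · simp [hb_def]
    · have hun : 0 < ‖u‖ := norm_pos_iff.mpr hu
      set c : ℝ := ‖u‖⁻¹ with hc_def
      have hc : 0 < c := inv_pos.mpr hun
      have hcu : ‖c • u‖ = 1 := by
        rw [norm_smul, Real.norm_eq_abs, abs_of_pos hc, hc_def, inv_mul_cancel₀ hun.ne']
      have hbcu : b (c • u) = (c * c) • b u := by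
        simp only [hb_def, RightCStarModule.inner_smul_left_real, RightCStarModule.inner_smul_right_real,
          smul_mul_smul_comm]
        rw [Finset.smul_sum]
      have h1 : Real.sqrt ‖b (c • u)‖ ≤ muStar (A := A) x := hle_sup _ hcu.le
      have h2 : ‖b (c • u)‖ ≤ muStar (A := A) x ^ 2 := by
        have := pow_le_pow_left₀ (Real.sqrt_nonneg _) h1 2
        rwa [Real.sq_sqrt (norm_nonneg _)] at this
      rw [hbcu, norm_smul, Real.norm_eq_abs, abs_of_pos (by positivity)] at h2
      have hcc : c * c = (‖u‖ ^ 2)⁻¹ := by rw [hc_def, sq, mul_inv]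
      rw [hcc] at h2
      have h3 : (0 : ℝ) < ‖u‖ ^ 2 := by positivity
      calc ‖b u‖ = (‖u‖ ^ 2) * ((‖u‖ ^ 2)⁻¹ * ‖b u‖) := by
            field_simp
        _ ≤ (‖u‖ ^ 2) * muStar (A := A) x ^ 2 := by
            exact mul_le_mul_of_nonneg_left h2 h3.le
        _ = muStar (A := A) x ^ 2 * ‖u‖ ^ 2 := mul_comm _ _
  -- main order bound : b z ≤ μ² • ⟪z, z⟫
  have hmain : ∀ z : E, b z ≤ (muStar (A := A) x ^ 2) • ⟪z, z⟫_A := by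
    intro z
    set d := ⟪z, z⟫_A with hd_def
    have hd : 0 ≤ d := RightCStarModule.inner_self_nonneg
    set m : ℝ := muStar (A := A) x ^ 2 with hm_def
    have hm0 : 0 ≤ m := sq_nonneg _
    refine muStarAux.le_of_forall_le_add_smul_one _ _ fun ε' hε' => ?_
    set δ : ℝ := ε' / (m + 1) with hδ_def
    have hδ0 : 0 < δ := by positivity
    set dε : A := d + δ • (1 : A) with hdε_def
    have hδA : 0 ≤ δ • (1 : A) := smul_nonneg hδ0.le zero_le_one
    have hdεn : 0 ≤ dε := add_nonneg hd hδA
    have hδunit : IsUnit (δ • (1 : A)) := by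
      refine ⟨⟨δ • 1, δ⁻¹ • 1, ?_, ?_⟩, rfl⟩ <;>
        rw [smul_mul_smul_comm, one_mul] <;>
        simp [mul_inv_cancel₀ hδ0.ne', inv_mul_cancel₀ hδ0.ne']
    have hunit : IsUnit dε := CStarAlgebra.isUnit_of_le _ (le_add_of_nonneg_left hd) (hδunit.isStrictlyPositive hδA)
    have hsp : 0 ∉ spectrum ℝ≥0 dε := spectrum.zero_notMem ℝ≥0 hunit
    set a : A := dε ^ (-(1 / 2) : ℝ) with ha_def
    have ha0 : 0 ≤ a := CFC.rpow_nonneg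
    have hasa : star a = a := (IsSelfAdjoint.of_nonneg ha0).star_eq
    have haa : a * dε * a = 1 := CFC.conjugate_rpow_neg_one_half _ (hunit.isStrictlyPositive hdεn)
    have hww : ⟪z <• a, z <• a⟫_A = a * d * a := by
      rw [RightCStarModule.inner_op_smul_left, RightCStarModule.inner_op_smul_right, hasa, mul_assoc,
        ← hd_def, ← mul_assoc]
    have hwnorm : ‖z <• a‖ ^ 2 ≤ 1 := by
      rw [RightCStarModule.norm_sq_eq (A := A), hww]
      have h1 : a * d * a ≤ 1 := by
        have h2 := conjugate_le_conjugate_of_nonneg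
          (le_add_of_nonneg_right hδA : d ≤ dε) ha0
        rwa [haa] at h2
      exact (CStarAlgebra.norm_le_one_iff_of_nonneg _
        (conjugate_nonneg_of_nonneg hd ha0)).mpr h1
    have hbw : b (z <• a) = a * b z * a := by
      simp only [hb_def, RightCStarModule.inner_op_smul_left, RightCStarModule.inner_op_smul_right, hasa]
      rw [Finset.mul_sum, Finset.sum_mul]
      exact Finset.sum_congr rfl fun i _ => by simp [mul_assoc]
    have hbwle : a * b z * a ≤ m • (1 : A) := by
      rw [← hbw, ← Algebra.algebraMap_eq_smul_one]
      refine (CStarAlgebra.norm_le_iff_le_algebraMap _ hm0 (hb_nonneg _)).mp ?_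
      calc ‖b (z <• a)‖ ≤ muStar (A := A) x ^ 2 * ‖z <• a‖ ^ 2 := hm _
        _ ≤ m := by
            rw [← hm_def]
            nlinarith [hwnorm, hm0, sq_nonneg ‖z <• a‖]
    set r : A := dε ^ ((1 / 2 : ℝ)) with hr_def
    have hr0 : 0 ≤ r := CFC.rpow_nonneg
    have hra : r * a = 1 := by
      rw [hr_def, ha_def, ← CFC.rpow_add hunit,
        show (1 / 2 : ℝ) + (-(1 / 2)) = 0 by norm_num, CFC.rpow_zero _ hdεn]
    have har : a * r = 1 := by
      rw [hr_def, ha_def, ← CFC.rpow_add hunit,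
        show (-(1 / 2) : ℝ) + (1 / 2) = 0 by norm_num, CFC.rpow_zero _ hdεn]
    have hrr : r * r = dε := by
      rw [hr_def, ← CFC.rpow_add hunit,
        show (1 / 2 : ℝ) + 1 / 2 = 1 by norm_num, CFC.rpow_one _ hdεn]
    have hconj := conjugate_le_conjugate_of_nonneg hbwle hr0
    have hL : r * (a * b z * a) * r = b z := by
      have h4 : r * (a * b z * a) * r = (r * a) * b z * (a * r) := by
        simp [mul_assoc]
      rw [h4, hra, har, one_mul, mul_one]
    have hR : r * (m • (1 : A)) * r = m • dε := by
      rw [mul_smul_comm, smul_mul_assoc, mul_one, hrr]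
    rw [hL, hR] at hconj
    have h5 : m • dε = m • d + (m * δ) • (1 : A) := by
      rw [hdε_def, smul_add, smul_smul]
    rw [h5] at hconj
    refine hconj.trans (add_le_add_right ?_ _)
    rw [← sub_nonneg, ← sub_smul]
    refine smul_nonneg ?_ zero_le_one
    rw [hδ_def, sub_nonneg, mul_comm, div_mul_eq_mul_div, div_le_iff₀ (by positivity : (0:ℝ) < m + 1)]
    nlinarith [hm0, hε'.le]
  -- sqrt of the scalar multiple
  have hsqrt_smul : ∀ z : E, CFC.sqrt ((muStar (A := A) x ^ 2) • ⟪z, z⟫_A)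
      = muStar (A := A) x • CFC.sqrt ⟪z, z⟫_A := by
    intro z
    refine CFC.sqrt_unique ?_ (smul_nonneg hmu_nonneg (CFC.sqrt_nonneg _))
    rw [smul_mul_smul_comm, CFC.sqrt_mul_sqrt_self _ RightCStarModule.inner_self_nonneg, ← sq]
  -- positivity of muStar
  have hpos : 0 < muStar (A := A) x := by
    obtain ⟨i, hi⟩ : ∃ i, x i ≠ 0 := by
      by_contra h
      push_neg at h
      exact hx (funext h)
    have hxi : 0 < ‖x i‖ := norm_pos_iff.mpr hi
    set u : E := (‖x i‖⁻¹ : ℝ) • x i with hu_def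
    have hu : ‖u‖ = 1 := by
      rw [hu_def, norm_smul, Real.norm_eq_abs, abs_of_pos (inv_pos.mpr hxi),
        inv_mul_cancel₀ hxi.ne']
    have hterm : ⟪u, x i⟫_A * ⟪x i, u⟫_A ≤ b u := by
      refine Finset.single_le_sum (f := fun j => ⟪u, x j⟫_A * ⟪x j, u⟫_A)
        (fun j _ => ?_) (Finset.mem_univ i)
      show 0 ≤ ⟪u, x j⟫_A * ⟪x j, u⟫_A
      rw [← RightCStarModule.star_inner (x j) u]
      exact star_mul_self_nonneg _
    have htnonneg : 0 ≤ ⟪u, x i⟫_A * ⟪x i, u⟫_A := by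
      rw [← RightCStarModule.star_inner (x i) u]
      exact star_mul_self_nonneg _
    have hterm_norm : ‖⟪u, x i⟫_A * ⟪x i, u⟫_A‖ = ‖x i‖ ^ 2 := by
      rw [← RightCStarModule.star_inner (x i) u, CStarRing.norm_star_mul_self]
      have h6 : ‖⟪x i, u⟫_A‖ = ‖x i‖ := by
        rw [hu_def, RightCStarModule.inner_smul_right_real, norm_smul, Real.norm_eq_abs,
          abs_of_pos (inv_pos.mpr hxi), ← RightCStarModule.norm_sq_eq, sq]
        rw [← mul_assoc, inv_mul_cancel₀ hxi.ne', one_mul]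
      rw [h6, sq]
    have h7 : ‖x i‖ ^ 2 ≤ ‖b u‖ := by
      rw [← hterm_norm]
      exact CStarAlgebra.norm_le_norm_of_nonneg_of_le htnonneg hterm
    have h8 : 0 < Real.sqrt ‖b u‖ := Real.sqrt_pos.mpr (by nlinarith)
    exact h8.trans_le (hle_sup u hu.le)
  constructor
  · refine ⟨hpos, fun z => ?_⟩
    have h1 := muStarAux.sqrt_le_sqrt (hb_nonneg z) (hmain z)
    rwa [hsqrt_smul z] at h1
  · rintro l ⟨hl0, hl⟩
    rw [hmuStar]
    refine ciSup_le fun yp => ?_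
    obtain ⟨y, hy⟩ := yp
    have hsn : ∀ c : A, 0 ≤ c → ‖CFC.sqrt c‖ = Real.sqrt ‖c‖ := by
      intro c hc
      have h2 : ‖c‖ = ‖CFC.sqrt c‖ * ‖CFC.sqrt c‖ := by
        conv_lhs => rw [← CFC.sqrt_mul_sqrt_self c hc]
        rw [← CStarRing.norm_star_mul_self (x := CFC.sqrt c),
          (IsSelfAdjoint.of_nonneg (CFC.sqrt_nonneg (a := c))).star_eq]
      rw [h2, Real.sqrt_mul_self (norm_nonneg _)]
    have h1 : ‖CFC.sqrt (b y)‖ ≤ ‖l • CFC.sqrt ⟪y, y⟫_A‖ :=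
      CStarAlgebra.norm_le_norm_of_nonneg_of_le (CFC.sqrt_nonneg _) (hl y)
    calc Real.sqrt ‖b y‖ = ‖CFC.sqrt (b y)‖ := (hsn _ (hb_nonneg y)).symm
      _ ≤ ‖l • CFC.sqrt ⟪y, y⟫_A‖ := h1
      _ = l * ‖CFC.sqrt ⟪y, y⟫_A‖ := by
          rw [norm_smul, Real.norm_eq_abs, abs_of_pos hl0]
      _ = l * ‖y‖ := by
          rw [hsn _ RightCStarModule.inner_self_nonneg, ← RightCStarModule.norm_eq_sqrt_norm_inner_self]
      _ ≤ l * 1 := mul_le_mul_of_nonneg_left hy hl0.le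
      _ = l := mul_one l
end
end

section
/- Let A be a C*-algebra and let (a_λ)_{λ∈Λ} be a net of self-adjoint elements of A that is increasing (λ ≤ μ implies a_λ ≤ a_μ in the canonical order on self-adjoint elements) and bounded above (there exists b ∈ A with a_λ ≤ b for all λ). Then (a_λ) converges weakly in the bidual A″ of A: there exists Φ in the double dual A″ such that for every continuous linear functional φ on A, the net (φ(a_λ)) converges to Φ(φ). -/
open Filter Finset

/-- Core lemma: for a monotone net bounded above in a C*-algebra and any real-linear
continuous functional, the image net is Cauchy. -/
lemma cauchy_real_net_of_monotone {A : Type*} [NonUnitalCStarAlgebra A] [PartialOrder A]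
    [StarOrderedRing A] {Λ : Type*} [Preorder Λ] [Nonempty Λ] [IsDirected Λ (· ≤ ·)]
    (a : Λ → A) (hmono : Monotone a) (b : A) (hb : ∀ l, a l ≤ b)
    (ψ : A →L[ℝ] ℝ) : Cauchy (Filter.map (fun l => ψ (a l)) Filter.atTop) := by
  set f : Λ → ℝ := fun l => ψ (a l) with hf
  rw [Metric.cauchy_iff]
  refine ⟨Filter.map_neBot, ?_⟩
  by_contra h
  push_neg at h
  obtain ⟨ε, hε, hnc⟩ := h
  have key : ∀ l : Λ, ∃ p : Λ × Λ, l ≤ p.1 ∧ p.1 ≤ p.2 ∧ ε / 2 ≤ |f p.2 - f p.1| := by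
    intro l
    have hmem : f '' Set.Ici l ∈ Filter.map f Filter.atTop := by
      rw [Filter.mem_map]
      exact Filter.mem_of_superset (Filter.Ici_mem_atTop l) (Set.subset_preimage_image f _)
    obtain ⟨x, hx, y, hy, hxy⟩ := hnc (f '' Set.Ici l) hmem
    obtain ⟨μ, hμ, rfl⟩ := hx
    obtain ⟨ν, hν, rfl⟩ := hy
    have hd : ε ≤ dist (f μ) (f ν) := hxy
    obtain ⟨κ, hμκ, hνκ⟩ := directed_of (· ≤ ·) μ ν
    rcases le_or_gt (ε / 2) (dist (f μ) (f κ)) with h1 | h1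
    · refine ⟨(μ, κ), hμ, hμκ, ?_⟩
      rw [Real.dist_eq] at h1
      rwa [abs_sub_comm] at h1
    · have h2 : ε / 2 ≤ dist (f κ) (f ν) := by
        have := dist_triangle (f μ) (f κ) (f ν)
        linarith
      refine ⟨(ν, κ), hν, hνκ, ?_⟩
      rwa [Real.dist_eq] at h2
  choose g hg1 hg2 hg3 using key
  set l0 : Λ := Classical.arbitrary Λ with hl0
  set q : ℕ → Λ × Λ := fun n => Nat.rec (g l0) (fun _ p => g p.2) n with hqdef
  have hq0 : q 0 = g l0 := rfl
  have hqs : ∀ n, q (n + 1) = g (q n).2 := fun n => rfl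
  have hμν : ∀ n, (q n).1 ≤ (q n).2 := by
    intro n
    cases n with
    | zero => exact hg2 l0
    | succ m => exact hg2 (q m).2
  have hlink : ∀ n, (q n).2 ≤ (q (n + 1)).1 := by
    intro n
    rw [hqs n]
    exact hg1 (q n).2
  have hgap : ∀ n, ε / 2 ≤ |f (q n).2 - f (q n).1| := by
    intro n
    cases n with
    | zero => exact hg3 l0
    | succ m => exact hg3 (q m).2
  set d : ℕ → A := fun n => a (q n).2 - a (q n).1 with hd
  have hd0 : ∀ n, 0 ≤ d n := fun n => sub_nonneg.2 (hmono (hμν n))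
  set e : ℕ → A := fun n => if 0 ≤ f (q n).2 - f (q n).1 then d n else -d n with he
  have hψd : ∀ n, ψ (d n) = f (q n).2 - f (q n).1 := by
    intro n
    simp [hd, hf, map_sub]
  have hen : ∀ n, e n = if 0 ≤ f (q n).2 - f (q n).1 then d n else -d n := fun n => rfl
  have hψe : ∀ n, ψ (e n) = |f (q n).2 - f (q n).1| := by
    intro n
    rw [hen n]
    by_cases hcond : 0 ≤ f (q n).2 - f (q n).1
    · rw [if_pos hcond, hψd n, abs_of_nonneg hcond]
    · rw [if_neg hcond, map_neg, hψd n, abs_of_neg (not_le.1 hcond)]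
  have he_le : ∀ n, e n ≤ d n := by
    intro n
    rw [hen n]
    by_cases hcond : 0 ≤ f (q n).2 - f (q n).1
    · rw [if_pos hcond]
    · rw [if_neg hcond]
      exact neg_le_self (hd0 n)
  have he_ge : ∀ n, -d n ≤ e n := by
    intro n
    rw [hen n]
    by_cases hcond : 0 ≤ f (q n).2 - f (q n).1
    · rw [if_pos hcond]
      exact neg_le_self (hd0 n)
    · rw [if_neg hcond]
  set c : A := b - a (q 0).1 with hc
  have hsum_le : ∀ n, ∑ k ∈ range n, d k ≤ a (q n).1 - a (q 0).1 := by
    intro n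
    induction n with
    | zero => simp
    | succ m ih =>
      rw [Finset.sum_range_succ]
      have h1 : ∑ k ∈ range m, d k + d m ≤ (a (q m).1 - a (q 0).1) + d m :=
        add_le_add_left ih _
      have h2 : (a (q m).1 - a (q 0).1) + d m = a (q m).2 - a (q 0).1 := by
        simp only [hd]; abel
      rw [h2] at h1
      exact h1.trans (sub_le_sub_right (hmono (hlink m)) _)
  have hs_le_c : ∀ n, ∑ k ∈ range n, d k ≤ c :=
    fun n => (hsum_le n).trans (sub_le_sub_right (hb _) _)
  have hs_nonneg : ∀ n, (0 : A) ≤ ∑ k ∈ range n, d k :=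
    fun n => Finset.sum_nonneg fun k _ => hd0 k
  have hcnorm : ∀ n, ‖∑ k ∈ range n, e k‖ ≤ 3 * ‖c‖ := by
    intro n
    have h1 : (0 : A) ≤ ∑ k ∈ range n, e k + ∑ k ∈ range n, d k := by
      rw [← Finset.sum_add_distrib]
      refine Finset.sum_nonneg fun k _ => ?_
      have := add_le_add_left (he_ge k) (d k)
      simpa using this
    have h2 : ∑ k ∈ range n, e k + ∑ k ∈ range n, d k ≤ c + c :=
      add_le_add ((Finset.sum_le_sum fun k _ => he_le k).trans (hs_le_c n)) (hs_le_c n)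
    have h3 : ‖∑ k ∈ range n, e k + ∑ k ∈ range n, d k‖ ≤ ‖c + c‖ :=
      CStarAlgebra.norm_le_norm_of_nonneg_of_le h1 h2
    have h4 : ‖∑ k ∈ range n, d k‖ ≤ ‖c‖ :=
      CStarAlgebra.norm_le_norm_of_nonneg_of_le (hs_nonneg n) (hs_le_c n)
    calc ‖∑ k ∈ range n, e k‖
        = ‖(∑ k ∈ range n, e k + ∑ k ∈ range n, d k) - ∑ k ∈ range n, d k‖ := by
          rw [add_sub_cancel_right]
      _ ≤ ‖∑ k ∈ range n, e k + ∑ k ∈ range n, d k‖ + ‖∑ k ∈ range n, d k‖ :=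
          norm_sub_le _ _
      _ ≤ ‖c + c‖ + ‖c‖ := add_le_add h3 h4
      _ ≤ (‖c‖ + ‖c‖) + ‖c‖ := add_le_add_left (norm_add_le c c) _
      _ = 3 * ‖c‖ := by ring
  obtain ⟨n, hn⟩ := exists_nat_gt (‖ψ‖ * (3 * ‖c‖) / (ε / 2))
  have hlow : (n : ℝ) * (ε / 2) ≤ ψ (∑ k ∈ range n, e k) := by
    rw [map_sum]
    calc (n : ℝ) * (ε / 2) = ∑ _k ∈ range n, (ε / 2) := by
          rw [Finset.sum_const, Finset.card_range, nsmul_eq_mul]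
      _ ≤ ∑ k ∈ range n, ψ (e k) := by
          refine Finset.sum_le_sum fun k _ => ?_
          rw [hψe k]
          exact hgap k
  have hup : ψ (∑ k ∈ range n, e k) ≤ ‖ψ‖ * (3 * ‖c‖) := by
    calc ψ (∑ k ∈ range n, e k) ≤ |ψ (∑ k ∈ range n, e k)| := le_abs_self _
      _ ≤ ‖ψ‖ * ‖∑ k ∈ range n, e k‖ := ψ.le_opNorm _
      _ ≤ ‖ψ‖ * (3 * ‖c‖) := by
          exact mul_le_mul_of_nonneg_left (hcnorm n) (norm_nonneg ψ)
  have : ‖ψ‖ * (3 * ‖c‖) < (n : ℝ) * (ε / 2) := by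
    rwa [div_lt_iff₀ (by linarith)] at hn
  linarith

/-- Every increasing net of self-adjoint elements of a C*-algebra `A` that is bounded above
converges weakly in the bidual `A″`: there is `Φ ∈ A″` such that `φ(a_λ) → Φ(φ)` for every
continuous linear functional `φ` on `A`. -/
theorem exists_bidual_weak_limit_of_monotone_of_bddAbove
    {A : Type*} [NonUnitalCStarAlgebra A] [PartialOrder A] [StarOrderedRing A]
    {Λ : Type*} [Preorder Λ] [Nonempty Λ] [IsDirected Λ (· ≤ ·)]
    (a : Λ → A) (hsa : ∀ l, IsSelfAdjoint (a l)) (hmono : Monotone a)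
    (b : A) (hb : ∀ l, a l ≤ b) :
    ∃ Φ : StrongDual ℂ (StrongDual ℂ A),
      ∀ φ : StrongDual ℂ A,
        Filter.Tendsto (fun l => φ (a l)) Filter.atTop (nhds (Φ φ)) := by
  classical
  have hconv : ∀ φ : StrongDual ℂ A, ∃ z : ℂ,
      Filter.Tendsto (fun l => φ (a l)) Filter.atTop (nhds z) := by
    intro φ
    have hre := cauchy_real_net_of_monotone a hmono b hb
      (Complex.reCLM.comp (φ.restrictScalars ℝ))
    have him := cauchy_real_net_of_monotone a hmono b hb
      (Complex.imCLM.comp (φ.restrictScalars ℝ))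
    obtain ⟨r1, h1⟩ := CompleteSpace.complete hre
    obtain ⟨r2, h2⟩ := CompleteSpace.complete him
    have t1 : Filter.Tendsto (fun l => (φ (a l)).re) Filter.atTop (nhds r1) := h1
    have t2 : Filter.Tendsto (fun l => (φ (a l)).im) Filter.atTop (nhds r2) := h2
    refine ⟨(r1 : ℂ) + (r2 : ℂ) * Complex.I, ?_⟩
    have tc : Filter.Tendsto
        (fun l => ((φ (a l)).re : ℂ) + ((φ (a l)).im : ℂ) * Complex.I)
        Filter.atTop (nhds ((r1 : ℂ) + (r2 : ℂ) * Complex.I)) :=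
      ((Complex.continuous_ofReal.tendsto r1).comp t1).add
        (((Complex.continuous_ofReal.tendsto r2).comp t2).mul tendsto_const_nhds)
    simpa [Complex.re_add_im] using tc
  choose L hL using hconv
  set l0 : Λ := Classical.arbitrary Λ with hl0
  set M : ℝ := ‖a l0‖ + ‖b - a l0‖ with hM
  have hbound : ∀ φ : StrongDual ℂ A, ‖L φ‖ ≤ M * ‖φ‖ := by
    intro φ
    have hev : ∀ᶠ l in Filter.atTop, ‖φ (a l)‖ ≤ M * ‖φ‖ := by
      filter_upwards [Filter.Ici_mem_atTop l0] with l hl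
      have h0 : (0 : A) ≤ a l - a l0 := sub_nonneg.2 (hmono hl)
      have h1 : a l - a l0 ≤ b - a l0 := sub_le_sub_right (hb l) _
      have h2 : ‖a l - a l0‖ ≤ ‖b - a l0‖ := CStarAlgebra.norm_le_norm_of_nonneg_of_le h0 h1
      have h3 : ‖a l‖ ≤ M := by
        calc ‖a l‖ = ‖a l0 + (a l - a l0)‖ := by rw [add_sub_cancel]
          _ ≤ ‖a l0‖ + ‖a l - a l0‖ := norm_add_le _ _
          _ ≤ ‖a l0‖ + ‖b - a l0‖ := add_le_add_right h2 _
      calc ‖φ (a l)‖ ≤ ‖φ‖ * ‖a l‖ := φ.le_opNorm _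
        _ ≤ ‖φ‖ * M := mul_le_mul_of_nonneg_left h3 (norm_nonneg _)
        _ = M * ‖φ‖ := mul_comm _ _
    exact le_of_tendsto (hL φ).norm hev
  have hadd : ∀ φ₁ φ₂ : StrongDual ℂ A, L (φ₁ + φ₂) = L φ₁ + L φ₂ := by
    intro φ₁ φ₂
    refine tendsto_nhds_unique (hL (φ₁ + φ₂)) ?_
    have := (hL φ₁).add (hL φ₂)
    simpa using this
  have hsmul : ∀ (c : ℂ) (φ : StrongDual ℂ A), L (c • φ) = c * L φ := by
    intro c φ
    refine tendsto_nhds_unique (hL (c • φ)) ?_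
    have := (hL φ).const_mul c
    simpa using this
  let Φlin : StrongDual ℂ A →ₗ[ℂ] ℂ :=
    { toFun := L
      map_add' := hadd
      map_smul' := fun c φ => by simpa using hsmul c φ }
  exact ⟨LinearMap.mkContinuous Φlin M hbound, fun φ => hL φ⟩
end
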